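/- arXiv:1805.05550 — 10 statements merged into one kernel-verified Lean document; each statement's English description precedes it below -/
import Mathlib

section
/- Let λ > 0 and let u : ℝ → ℝ be a twice differentiable bounded function satisfying u'' = λ(e^u - 1) on ℝ with u(x) → 0 as x → ±∞ and u'(x) → 0 as x → ±∞. Then u ≡ 0. -/
open Real Filter

section Aux
open Set

lemma core1 (lam : ℝ) (hlam : 0 < lam) (u : ℝ → ℝ)
    (hc : Continuous u) (hc' : Continuous (deriv u))
    (hen : ∀ x, (deriv u x)^2 = 2*lam*(Real.exp (u x) - u x - 1))
    (x0 : ℝ) (hx0 : 0 < u x0) (hd : 0 < deriv u x0)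
    (hT : Tendsto u atTop (nhds 0)) : False := by
  have key : ∀ x, deriv u x = 0 → u x = 0 := by
    intro x hx
    by_contra h
    have := Real.add_one_lt_exp (x := u x) h
    nlinarith [hen x]
  have Tpos : ∀ x, x0 ≤ x → 0 < deriv u x := by
    by_contra hcon
    push_neg at hcon
    set T : Set ℝ := {x | x0 ≤ x ∧ deriv u x ≤ 0} with hTdef
    have hTne : T.Nonempty := by
      obtain ⟨x, hx1, hx2⟩ := hcon
      exact ⟨x, hx1, hx2⟩
    have hTclosed : IsClosed T := (isClosed_le continuous_const continuous_id).inter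
      (isClosed_le hc' continuous_const)
    have hTbdd : BddBelow T := ⟨x0, fun x hx => hx.1⟩
    have hsmem : sInf T ∈ T := hTclosed.csInf_mem hTne hTbdd
    set s := sInf T
    have hx0s : x0 < s := by
      rcases lt_or_eq_of_le hsmem.1 with h | h
      · exact h
      · exact absurd (h ▸ hsmem.2) (not_le.mpr hd)
    have hpos : ∀ t, x0 ≤ t → t < s → 0 < deriv u t := by
      intro t ht1 ht2
      by_contra h
      exact absurd (csInf_le hTbdd ⟨ht1, le_of_not_gt h⟩) (not_le.mpr ht2)
    -- deriv u s ≥ 0 by left limit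
    have hge : 0 ≤ deriv u s := by
      have htd : Tendsto (deriv u) (nhdsWithin s (Iio s)) (nhds (deriv u s)) :=
        (hc'.tendsto s).mono_left nhdsWithin_le_nhds
      refine ge_of_tendsto htd ?_
      filter_upwards [Ioo_mem_nhdsLT_of_mem (⟨hx0s, le_refl s⟩ : s ∈ Ioc x0 s)] with t ht
      exact (hpos t ht.1.le ht.2).le
    have hz : deriv u s = 0 := le_antisymm hsmem.2 hge
    have hmono : StrictMonoOn u (Icc x0 s) := by
      apply strictMonoOn_of_deriv_pos (convex_Icc x0 s) (hc.continuousOn)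
      intro t ht
      rw [interior_Icc] at ht
      exact hpos t ht.1.le ht.2
    have : u x0 < u s := hmono ⟨le_refl _, hx0s.le⟩ ⟨hx0s.le, le_refl _⟩ hx0s
    have := key s hz
    linarith
  have hmono : StrictMonoOn u (Ici x0) := by
    apply strictMonoOn_of_deriv_pos (convex_Ici x0) (hc.continuousOn)
    intro t ht
    rw [interior_Ici] at ht
    exact Tpos t ht.le
  have : u x0 ≤ 0 := by
    refine ge_of_tendsto hT ?_
    filter_upwards [eventually_ge_atTop x0] with t ht
    rcases lt_or_eq_of_le ht with h | h
    · exact (hmono (self_mem_Ici) ht h).le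
    · exact (h ▸ le_refl _)
  linarith

lemma core2 (lam : ℝ) (hlam : 0 < lam) (u : ℝ → ℝ)
    (hc : Continuous u) (hc' : Continuous (deriv u))
    (hen : ∀ x, (deriv u x)^2 = 2*lam*(Real.exp (u x) - u x - 1))
    (x0 : ℝ) (hx0 : u x0 < 0) (hd : deriv u x0 < 0)
    (hT : Tendsto u atTop (nhds 0)) : False := by
  have key : ∀ x, deriv u x = 0 → u x = 0 := by
    intro x hx
    by_contra h
    have := Real.add_one_lt_exp (x := u x) h
    nlinarith [hen x]
  have Tneg : ∀ x, x0 ≤ x → deriv u x < 0 := by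
    by_contra hcon
    push_neg at hcon
    set T : Set ℝ := {x | x0 ≤ x ∧ 0 ≤ deriv u x} with hTdef
    have hTne : T.Nonempty := by
      obtain ⟨x, hx1, hx2⟩ := hcon
      exact ⟨x, hx1, hx2⟩
    have hTclosed : IsClosed T := (isClosed_le continuous_const continuous_id).inter
      (isClosed_le continuous_const hc')
    have hTbdd : BddBelow T := ⟨x0, fun x hx => hx.1⟩
    have hsmem : sInf T ∈ T := hTclosed.csInf_mem hTne hTbdd
    set s := sInf T
    have hx0s : x0 < s := by
      rcases lt_or_eq_of_le hsmem.1 with h | h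
      · exact h
      · exact absurd (h ▸ hsmem.2) (not_le.mpr hd)
    have hneg : ∀ t, x0 ≤ t → t < s → deriv u t < 0 := by
      intro t ht1 ht2
      by_contra h
      exact absurd (csInf_le hTbdd ⟨ht1, le_of_not_gt h⟩) (not_le.mpr ht2)
    have hle : deriv u s ≤ 0 := by
      have htd : Tendsto (deriv u) (nhdsWithin s (Iio s)) (nhds (deriv u s)) :=
        (hc'.tendsto s).mono_left nhdsWithin_le_nhds
      refine le_of_tendsto htd ?_
      filter_upwards [Ioo_mem_nhdsLT_of_mem (⟨hx0s, le_refl s⟩ : s ∈ Ioc x0 s)] with t ht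
      exact (hneg t ht.1.le ht.2).le
    have hz : deriv u s = 0 := le_antisymm hle hsmem.2
    have hmono : StrictAntiOn u (Icc x0 s) := by
      apply strictAntiOn_of_deriv_neg (convex_Icc x0 s) (hc.continuousOn)
      intro t ht
      rw [interior_Icc] at ht
      exact hneg t ht.1.le ht.2
    have : u s < u x0 := hmono ⟨le_refl _, hx0s.le⟩ ⟨hx0s.le, le_refl _⟩ hx0s
    have := key s hz
    linarith
  have hmono : StrictAntiOn u (Ici x0) := by
    apply strictAntiOn_of_deriv_neg (convex_Ici x0) (hc.continuousOn)
    intro t ht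
    rw [interior_Ici] at ht
    exact Tneg t ht.le
  have : 0 ≤ u x0 := by
    refine le_of_tendsto hT ?_
    filter_upwards [eventually_ge_atTop x0] with t ht
    rcases lt_or_eq_of_le ht with h | h
    · exact (hmono (self_mem_Ici) ht h).le
    · exact (h ▸ le_refl _)
  linarith

end Aux


theorem stmt0 (lam : ℝ) (hlam : 0 < lam) (u : ℝ → ℝ)
    (hu : ContDiff ℝ 2 u)
    (hbd : ∃ M : ℝ, ∀ x, |u x| ≤ M)
    (heq : ∀ x, deriv (deriv u) x = lam * (Real.exp (u x) - 1))
    (h1 : Tendsto u atTop (nhds 0)) (h2 : Tendsto u atBot (nhds 0))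
    (h3 : Tendsto (deriv u) atTop (nhds 0)) (h4 : Tendsto (deriv u) atBot (nhds 0)) :
    ∀ x, u x = 0 := by
  have hu2 : ContDiff ℝ (1+1) u := hu.of_le (by norm_num)
  have hdu : ContDiff ℝ 1 (deriv u) := (contDiff_succ_iff_deriv.mp hu2).2.2
  have hdiff : Differentiable ℝ u := (contDiff_succ_iff_deriv.mp hu2).1
  have hddiff : Differentiable ℝ (deriv u) := hdu.differentiable (by norm_num)
  have hc : Continuous u := hdiff.continuous
  have hc' : Continuous (deriv u) := hddiff.continuous
  set E : ℝ → ℝ := fun x => (deriv u x)^2 - 2*lam*(Real.exp (u x) - u x) with hE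
  have hEderiv : ∀ x, HasDerivAt E 0 x := by
    intro x
    have hu1 : HasDerivAt u (deriv u x) x := (hdiff x).hasDerivAt
    have hu2' : HasDerivAt (deriv u) (deriv (deriv u) x) x := (hddiff x).hasDerivAt
    have := ((hu2'.pow 2).sub ((hu1.exp.sub hu1).const_mul (2*lam)))
    refine HasDerivAt.congr_deriv this ?_
    rw [heq x]; ring
  have hEconst : ∀ x, E x = E 0 :=
    fun x => is_const_of_deriv_eq_zero (fun y => (hEderiv y).differentiableAt)
      (fun y => (hEderiv y).deriv) x 0
  have hEtend : Tendsto E atTop (nhds ((0:ℝ)^2 - 2*lam*(Real.exp 0 - 0))) := by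
    apply Tendsto.sub
    · exact h3.pow 2
    · exact Tendsto.const_mul _ ((Real.continuous_exp.continuousAt.tendsto.comp h1).sub h1)
  have hE0 : E 0 = -(2*lam) := by
    have : Tendsto E atTop (nhds (E 0)) := by
      have : E = fun _ => E 0 := funext hEconst
      rw [this]; exact tendsto_const_nhds
    have := tendsto_nhds_unique this hEtend
    rw [this]; simp
  have hen : ∀ x, (deriv u x)^2 = 2*lam*(Real.exp (u x) - u x - 1) := by
    intro x
    have := hEconst x
    rw [hE0] at this
    simp only [hE] at this
    nlinarith [this]
  -- reflected function
  set v : ℝ → ℝ := fun x => u (-x) with hv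
  have hvc : Continuous v := hc.comp continuous_neg
  have hvd : ∀ x, deriv v x = -deriv u (-x) := fun x => deriv_comp_neg u x
  have hvc' : Continuous (deriv v) := by
    have : deriv v = fun x => -deriv u (-x) := funext hvd
    rw [this]; exact (hc'.comp continuous_neg).neg
  have hven : ∀ x, (deriv v x)^2 = 2*lam*(Real.exp (v x) - v x - 1) := by
    intro x; rw [hvd]; simpa using hen (-x)
  have hvT : Tendsto v atTop (nhds 0) := h2.comp tendsto_neg_atTop_atBot
  intro x
  by_contra hne
  have hdne : deriv u x ≠ 0 := by
    intro h
    have := Real.add_one_lt_exp (x := u x) hne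
    nlinarith [hen x]
  rcases lt_or_gt_of_ne hne with hneg | hpos
  · rcases lt_or_gt_of_ne hdne with hd | hd
    · exact core2 lam hlam u hc hc' hen x hneg hd h1
    · refine core2 lam hlam v hvc hvc' hven (-x) (show v (-x) < 0 by simp [hv]; simpa using hneg) ?_ hvT
      rw [hvd]; simpa using hd
  · rcases lt_or_gt_of_ne hdne with hd | hd
    · refine core1 lam hlam v hvc hvc' hven (-x) (show 0 < v (-x) by simp [hv]; simpa using hpos) ?_ hvT
      rw [hvd]; simpa using hd
    · exact core1 lam hlam u hc hc' hen x hpos hd h1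
end

section
/- Let λ > 0, x₀ ∈ ℝ, and u₀ < 0, and define u(x) = log( e^{u₀ - √λ(x - x₀)} / (1 - e^{u₀} + e^{u₀ - √λ(x - x₀)}) ). Then u is a C² solution of u'' = λ·e^u·(e^u - 1) on ℝ satisfying u(x) → 0 as x → -∞ and u(x) → -∞ as x → +∞. -/
open Real Filter

theorem stmt7 (lam x₀ u₀ : ℝ) (hlam : 0 < lam) (hu₀ : u₀ < 0) (u : ℝ → ℝ)
    (hu : u = fun x => Real.log (Real.exp (u₀ - Real.sqrt lam * (x - x₀)) /
      (1 - Real.exp u₀ + Real.exp (u₀ - Real.sqrt lam * (x - x₀))))) :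
    ContDiff ℝ 2 u ∧
    (∀ x, deriv (deriv u) x = lam * Real.exp (u x) * (Real.exp (u x) - 1)) ∧
    Tendsto u atBot (nhds 0) ∧ Tendsto u atTop atBot := by
  set s := Real.sqrt lam with hsdef
  have hs : 0 < s := Real.sqrt_pos.mpr hlam
  have hs2 : s ^ 2 = lam := Real.sq_sqrt hlam.le
  set a : ℝ := 1 - Real.exp u₀ with hadef
  have ha : 0 < a := by
    have := Real.exp_lt_one_iff.mpr hu₀
    simp [hadef]; linarith
  set g : ℝ → ℝ := fun x => u₀ - s * (x - x₀) with hgdef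
  have hpos : ∀ x, 0 < a + Real.exp (g x) := fun x =>
    add_pos ha (Real.exp_pos _)
  -- rewrite u
  have hurw : u = fun x => g x - Real.log (a + Real.exp (g x)) := by
    rw [hu]; funext x
    rw [Real.log_div (Real.exp_ne_zero _) (ne_of_gt (hpos x)), Real.log_exp]
  -- derivative of g
  have hg' : ∀ x, HasDerivAt g (-s) x := by
    intro x
    have h1 : HasDerivAt (fun x : ℝ => s * (x - x₀)) s x := by
      simpa using ((hasDerivAt_id x).sub_const x₀).const_mul s
    simpa using h1.const_sub u₀
  have hv : ∀ x, HasDerivAt (fun x => a + Real.exp (g x))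
      (Real.exp (g x) * (-s)) x := fun x => ((hg' x).exp).const_add a
  -- first derivative of u
  have hd1 : ∀ x, HasDerivAt u ((-s * a) / (a + Real.exp (g x))) x := by
    intro x
    have hlog : HasDerivAt (fun x => Real.log (a + Real.exp (g x)))
        ((Real.exp (g x) * (-s)) / (a + Real.exp (g x))) x :=
      (hv x).log (ne_of_gt (hpos x))
    have : HasDerivAt (fun x => g x - Real.log (a + Real.exp (g x))) _ x := (hg' x).sub hlog
    rw [← hurw] at this
    convert this using 1
    field_simp
    ring
  have hderiv1 : deriv u = fun x => (-s * a) / (a + Real.exp (g x)) :=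
    funext fun x => (hd1 x).deriv
  -- second derivative
  have hd2 : ∀ x, HasDerivAt (deriv u)
      (-(s ^ 2) * a * Real.exp (g x) / (a + Real.exp (g x)) ^ 2) x := by
    intro x
    rw [hderiv1]
    have : HasDerivAt (fun y => -s * a / (a + Real.exp (g y))) _ x := (hasDerivAt_const x (-s * a)).div (hv x) (ne_of_gt (hpos x))
    convert this using 1
    congr 1
    ring
  -- contDiff
  have hgc : ContDiff ℝ 2 g := by
    apply ContDiff.sub contDiff_const
    exact ContDiff.mul contDiff_const (ContDiff.sub contDiff_id contDiff_const)
  have hcd : ContDiff ℝ 2 u := by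
    rw [hurw]
    exact hgc.sub ((ContDiff.add contDiff_const hgc.exp).log
      (fun x => ne_of_gt (hpos x)))
  refine ⟨hcd, ?_, ?_, ?_⟩
  · intro x
    rw [(hd2 x).deriv]
    have hexpu : Real.exp (u x) = Real.exp (g x) / (a + Real.exp (g x)) := by
      rw [hu]
      exact Real.exp_log (div_pos (Real.exp_pos _) (hpos x))
    rw [hexpu, ← hs2]
    field_simp
    ring
  · -- Tendsto u atBot (nhds 0)
    have hurw2 : u = fun x => -Real.log (a * Real.exp (-(g x)) + 1) := by
      rw [hurw]; funext x
      have h1 : a * Real.exp (-(g x)) + 1 =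
          (a + Real.exp (g x)) * Real.exp (-(g x)) := by
        rw [add_mul, ← Real.exp_add]
        simp
      rw [h1, Real.log_mul (ne_of_gt (hpos x)) (Real.exp_ne_zero _),
        Real.log_exp]
      ring
    rw [hurw2]
    have hg_top : Tendsto g atBot atTop := by
      have h1 : Tendsto (fun x : ℝ => x - x₀) atBot atBot := by
        simpa [sub_eq_add_neg] using
          tendsto_atBot_add_const_right (atBot : Filter ℝ) (-x₀) tendsto_id
      have h2 : Tendsto (fun x : ℝ => s * (x - x₀)) atBot atBot :=
        h1.const_mul_atBot hs
      have h3 : Tendsto (fun x : ℝ => -(s * (x - x₀))) atBot atTop :=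
        tendsto_neg_atBot_atTop.comp h2
      have h4 := tendsto_atTop_add_const_left atBot u₀ h3
      simpa [hgdef, sub_eq_add_neg] using h4
    have hexp0 : Tendsto (fun x => Real.exp (-(g x))) atBot (nhds 0) :=
      Real.tendsto_exp_atBot.comp (tendsto_neg_atTop_atBot.comp hg_top)
    have h5 : Tendsto (fun x => a * Real.exp (-(g x)) + 1) atBot
        (nhds (a * 0 + 1)) := ((hexp0.const_mul a).add_const 1)
    have h6 : Tendsto (fun x => Real.log (a * Real.exp (-(g x)) + 1)) atBot
        (nhds (Real.log (a * 0 + 1))) := h5.log (by norm_num)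
    have := h6.neg
    simpa using this
  · -- Tendsto u atTop atBot
    rw [hurw]
    have hg_bot : Tendsto g atTop atBot := by
      have h1 : Tendsto (fun x : ℝ => x - x₀) atTop atTop := by
        simpa [sub_eq_add_neg] using
          tendsto_atTop_add_const_right (atTop : Filter ℝ) (-x₀) tendsto_id
      have h2 : Tendsto (fun x : ℝ => s * (x - x₀)) atTop atTop :=
        h1.const_mul_atTop hs
      have h3 : Tendsto (fun x : ℝ => -(s * (x - x₀))) atTop atBot :=
        tendsto_neg_atTop_atBot.comp h2
      have h4 := tendsto_atBot_add_const_left atTop u₀ h3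
      simpa [hgdef, sub_eq_add_neg] using h4
    have hexp0 : Tendsto (fun x => Real.exp (g x)) atTop (nhds 0) :=
      Real.tendsto_exp_atBot.comp hg_bot
    have h5 : Tendsto (fun x => Real.log (a + Real.exp (g x))) atTop
        (nhds (Real.log (a + 0))) := ((hexp0.const_add a)).log
        (by simpa using ne_of_gt ha)
    have h6 : Tendsto (fun x => -Real.log (a + Real.exp (g x))) atTop
        (nhds (-Real.log (a + 0))) := h5.neg
    have := h6.add_atBot hg_bot
    simpa [sub_eq_add_neg, add_comm] using this
end

section
/- Let λ > 0, x₀ ∈ ℝ, φ₀ ∈ (0,1), and define φ(x) = φ₀·e^{-(√λ/2)(x - x₀)} / (1 - φ₀² + φ₀²·e^{-√λ(x - x₀)})^{1/2}. Then 0 < φ(x) < 1 for all x, φ is strictly decreasing, φ(x) → 1 as x → -∞, and φ(x) → 0 as x → +∞. -/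
open Real Filter

private lemma sqrt_tendsto_atTop' : Tendsto Real.sqrt atTop atTop := by
  apply tendsto_atTop_atTop.mpr
  intro b
  refine ⟨b ^ 2, fun a ha => ?_⟩
  rcases le_or_gt b 0 with hb | hb
  · exact hb.trans (Real.sqrt_nonneg a)
  · calc b = Real.sqrt (b ^ 2) := (Real.sqrt_sq hb.le).symm
      _ ≤ Real.sqrt a := Real.sqrt_le_sqrt ha

theorem stmt8 (lam x₀ φ₀ : ℝ) (hlam : 0 < lam) (hφ₀ : φ₀ ∈ Set.Ioo (0:ℝ) 1) (φ : ℝ → ℝ)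
    (hφ : φ = fun x => φ₀ * Real.exp (-(Real.sqrt lam / 2) * (x - x₀)) /
      Real.sqrt (1 - φ₀ ^ 2 + φ₀ ^ 2 * Real.exp (-Real.sqrt lam * (x - x₀)))) :
    (∀ x, 0 < φ x ∧ φ x < 1) ∧ StrictAnti φ ∧
    Tendsto φ atBot (nhds 1) ∧ Tendsto φ atTop (nhds 0) := by
  obtain ⟨h0, h1⟩ := hφ₀
  set s := Real.sqrt lam with hs
  have hs0 : 0 < s := Real.sqrt_pos.mpr hlam
  set c := (1 - φ₀ ^ 2) / φ₀ ^ 2 with hc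
  have hφsq : 0 < φ₀ ^ 2 := by positivity
  have hφsq1 : φ₀ ^ 2 < 1 := by nlinarith
  have hc0 : 0 < c := div_pos (by linarith) hφsq
  set g : ℝ → ℝ := fun x => 1 + c * Real.exp (s * (x - x₀)) with hg
  have hg1 : ∀ x, 1 < g x := fun x => by
    have := Real.exp_pos (s * (x - x₀)); simp only [hg]; nlinarith
  have hg0 : ∀ x, 0 < g x := fun x => lt_trans one_pos (hg1 x)
  have key : ∀ x, φ x = 1 / Real.sqrt (g x) := by
    intro x
    rw [hφ]
    simp only [hg]
    have hE : (0:ℝ) < Real.exp (-s * (x - x₀)) := Real.exp_pos _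
    have hE' : (0:ℝ) < Real.exp (s * (x - x₀)) := Real.exp_pos _
    have hnum : φ₀ * Real.exp (-(s / 2) * (x - x₀)) =
        Real.sqrt (φ₀ ^ 2 * Real.exp (-s * (x - x₀))) := by
      rw [Real.sqrt_mul (by positivity), Real.sqrt_sq h0.le,
        show -s * (x - x₀) = (-(s/2) * (x-x₀)) * 2 by ring]
      congr 1
      rw [← Real.exp_half]
      ring_nf
    rw [hnum, ← Real.sqrt_div (by positivity)]
    have hD : (0:ℝ) < 1 - φ₀ ^ 2 + φ₀ ^ 2 * Real.exp (-s * (x - x₀)) := by nlinarith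
    have hEinv : Real.exp (-s * (x - x₀)) = (Real.exp (s * (x - x₀)))⁻¹ := by
      rw [← Real.exp_neg]; ring_nf
    have hratio : φ₀ ^ 2 * Real.exp (-s * (x - x₀)) /
        (1 - φ₀ ^ 2 + φ₀ ^ 2 * Real.exp (-s * (x - x₀))) =
        1 / (1 + c * Real.exp (s * (x - x₀))) := by
      rw [hEinv, hc]
      have h1g : (0:ℝ) < 1 + (1 - φ₀ ^ 2) / φ₀ ^ 2 * Real.exp (s * (x - x₀)) := by
        have := Real.exp_pos (s * (x - x₀))
        positivity
      field_simp
      ring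
    rw [hratio, Real.sqrt_div (by norm_num), Real.sqrt_one]
  have hsqrt1 : ∀ x, 1 < Real.sqrt (g x) := fun x =>
    (Real.lt_sqrt (by norm_num)).mpr (by simpa using hg1 x)
  refine ⟨fun x => ⟨?_, ?_⟩, ?_, ?_, ?_⟩
  · rw [key x]
    have := hsqrt1 x
    positivity
  · rw [key x, div_lt_one (lt_trans one_pos (hsqrt1 x))]
    exact hsqrt1 x
  · intro a b hab
    rw [key a, key b]
    have hgab : g a < g b := by
      simp only [hg]
      have : Real.exp (s * (a - x₀)) < Real.exp (s * (b - x₀)) :=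
        Real.exp_lt_exp.mpr (by nlinarith)
      nlinarith
    have hsab : Real.sqrt (g a) < Real.sqrt (g b) := Real.sqrt_lt_sqrt (hg0 a).le hgab
    exact one_div_lt_one_div_of_lt (lt_trans one_pos (hsqrt1 a)) hsab
  · -- atBot → 1
    have h1 : Tendsto (fun x : ℝ => s * (x - x₀)) atBot atBot := by
      apply Tendsto.const_mul_atBot hs0
      exact tendsto_atBot_add_const_right atBot (-x₀) tendsto_id
    have hexp : Tendsto (fun x : ℝ => Real.exp (s * (x - x₀))) atBot (nhds 0) :=
      Real.tendsto_exp_atBot.comp h1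
    have hglim : Tendsto g atBot (nhds 1) := by
      have h2 : Tendsto (fun x : ℝ => 1 + c * Real.exp (s * (x - x₀))) atBot
          (nhds (1 + c * 0)) := tendsto_const_nhds.add (hexp.const_mul c)
      simpa using h2
    have hsq : Tendsto (fun x => Real.sqrt (g x)) atBot (nhds 1) := by
      have := (Real.continuous_sqrt.tendsto 1).comp hglim
      simpa [Function.comp_def] using this
    have h2 : Tendsto (fun x => 1 / Real.sqrt (g x)) atBot (nhds 1) := by
      have h3 : Tendsto (fun x => (1:ℝ) / Real.sqrt (g x)) atBot (nhds (1 / 1)) :=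
        tendsto_const_nhds.div hsq one_ne_zero
      simpa using h3
    have hfe : φ = fun x => 1 / Real.sqrt (g x) := funext key
    rw [hfe]
    exact h2
  · -- atTop → 0
    have h1 : Tendsto (fun x : ℝ => s * (x - x₀)) atTop atTop := by
      apply Tendsto.const_mul_atTop hs0
      exact tendsto_atTop_add_const_right atTop (-x₀) tendsto_id
    have hexp : Tendsto (fun x : ℝ => Real.exp (s * (x - x₀))) atTop atTop :=
      Real.tendsto_exp_atTop.comp h1
    have hglim : Tendsto g atTop atTop :=
      tendsto_atTop_add_const_left atTop 1 (hexp.const_mul_atTop hc0)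
    have hsq : Tendsto (fun x => Real.sqrt (g x)) atTop atTop :=
      sqrt_tendsto_atTop'.comp hglim
    have h2 : Tendsto (fun x => 1 / Real.sqrt (g x)) atTop (nhds 0) := by
      simpa [one_div, Function.comp_def] using tendsto_inv_atTop_zero.comp hsq
    have hfe : φ = fun x => 1 / Real.sqrt (g x) := funext key
    rw [hfe]
    exact h2
end

section
/- Let κ > 0 and φ : ℝ → ℝ satisfy φ' = -(1/κ)φ(1-φ²) with φ(-∞) = 1, φ(+∞) = 0 and φ integrable appropriately. Then the total magnetic charge ∫_ℝ (2/κ²)·φ²(1 - φ²) dx = 1/κ. -/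
open Real Filter MeasureTheory

theorem stmt10 (κ : ℝ) (hκ : 0 < κ) (φ : ℝ → ℝ)
    (hφ : Differentiable ℝ φ)
    (heq : ∀ x, deriv φ x = -(1 / κ) * φ x * (1 - (φ x) ^ 2))
    (h1 : Tendsto φ atBot (nhds 1)) (h2 : Tendsto φ atTop (nhds 0))
    (hint : Integrable (fun x => (2 / κ ^ 2) * (φ x) ^ 2 * (1 - (φ x) ^ 2))) :
    ∫ x : ℝ, (2 / κ ^ 2) * (φ x) ^ 2 * (1 - (φ x) ^ 2) = 1 / κ := by
  have hd : ∀ x, HasDerivAt (fun x => -(1 / κ) * (φ x) ^ 2)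
      ((2 / κ ^ 2) * (φ x) ^ 2 * (1 - (φ x) ^ 2)) x := by
    intro x
    have h := ((hφ x).hasDerivAt.fun_pow 2).const_mul (-(1 / κ))
    refine h.congr_deriv ?_
    rw [heq]
    field_simp
    ring
  have hbot : Tendsto (fun x => -(1 / κ) * (φ x) ^ 2) atBot (nhds (-(1 / κ) * 1 ^ 2)) :=
    ((h1.pow 2).const_mul _)
  have htop : Tendsto (fun x => -(1 / κ) * (φ x) ^ 2) atTop (nhds (-(1 / κ) * 0 ^ 2)) :=
    ((h2.pow 2).const_mul _)
  rw [MeasureTheory.integral_of_hasDerivAt_of_tendsto hd hint hbot htop]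
  field_simp
  norm_num
end

section
/- Let λ > 0, b = e^{u₀}(2 - e^{u₀}) for some u₀ < 0, x₀ ∈ ℝ, and define u(x) = u₀ + log(2 - e^{u₀}) - log( 1 + (1 - e^{u₀})·cosh(√(λb)·(x - x₀)) ). Then u is an even function about x₀, a C² solution of u'' = λ·e^u·(e^u - 1) on ℝ, attains its global maximum u₀ at x₀, and u(x) → -∞ as x → ±∞. -/
open Real Filter

theorem tendsto_cosh_atTop' : Tendsto Real.cosh atTop atTop := by
  apply tendsto_atTop_mono (fun y => ?_) (Real.tendsto_exp_atTop.atTop_div_const (by norm_num : (0:ℝ) < 2))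
  rw [Real.cosh_eq]
  have := Real.exp_pos (-y)
  linarith

theorem stmt11 (lam x₀ u₀ : ℝ) (hlam : 0 < lam) (hu₀ : u₀ < 0)
    (b : ℝ) (hb : b = Real.exp u₀ * (2 - Real.exp u₀)) (u : ℝ → ℝ)
    (hu : u = fun x => u₀ + Real.log (2 - Real.exp u₀) -
      Real.log (1 + (1 - Real.exp u₀) * Real.cosh (Real.sqrt (lam * b) * (x - x₀)))) :
    (∀ x, u (x₀ + x) = u (x₀ - x)) ∧
    ContDiff ℝ 2 u ∧
    (∀ x, deriv (deriv u) x = lam * Real.exp (u x) * (Real.exp (u x) - 1)) ∧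
    (∀ x, u x ≤ u₀) ∧ u x₀ = u₀ ∧
    Tendsto u atTop atBot ∧ Tendsto u atBot atBot := by
  subst hb hu
  set a : ℝ := Real.exp u₀ with ha_def
  have ha0 : 0 < a := Real.exp_pos u₀
  have ha1 : a < 1 := by
    rw [ha_def, ← Real.exp_zero]
    exact Real.exp_lt_exp.mpr hu₀
  have hc0 : 0 < 1 - a := by linarith
  have hb0 : (0:ℝ) < a * (2 - a) := mul_pos ha0 (by linarith)
  set k : ℝ := Real.sqrt (lam * (a * (2 - a))) with hk_def
  have hk0 : 0 < k := Real.sqrt_pos.mpr (by positivity)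
  have hk2 : k ^ 2 = lam * (a * (2 - a)) := Real.sq_sqrt (by positivity)
  set D : ℝ → ℝ := fun x => 1 + (1 - a) * Real.cosh (k * (x - x₀)) with hD_def
  have hD1 : ∀ x, 2 - a ≤ D x := by
    intro x
    have h := Real.one_le_cosh (k * (x - x₀))
    simp only [hD_def]
    nlinarith
  have hD0 : ∀ x, 0 < D x := fun x => lt_of_lt_of_le (by linarith) (hD1 x)
  -- the function u, rewritten
  set U : ℝ → ℝ := fun x => u₀ + Real.log (2 - a) - Real.log (D x) with hU_def
  have hexp : ∀ x, Real.exp (U x) = a * (2 - a) / D x := by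
    intro x
    simp only [hU_def]
    rw [sub_eq_add_neg, Real.exp_add, Real.exp_add, Real.exp_neg,
      Real.exp_log (by linarith : (0:ℝ) < 2 - a), Real.exp_log (hD0 x)]
    rw [← ha_def]
    ring
  -- derivatives
  have hlin : ∀ x, HasDerivAt (fun y => k * (y - x₀)) k x := by
    intro x
    simpa using ((hasDerivAt_id x).sub_const x₀).const_mul k
  have hDder : ∀ x, HasDerivAt D ((1 - a) * (Real.sinh (k * (x - x₀)) * k)) x := by
    intro x
    exact (((Real.hasDerivAt_cosh (k * (x - x₀))).comp x (hlin x)).const_mul (1 - a)).const_add 1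
  set S : ℝ → ℝ := fun x => (1 - a) * (Real.sinh (k * (x - x₀)) * k) with hS_def
  have hUder : ∀ x, HasDerivAt U (-(S x / D x)) x := by
    intro x
    have hlog : HasDerivAt (fun y => Real.log (D y)) ((D x)⁻¹ * S x) x :=
      (Real.hasDerivAt_log (hD0 x).ne').comp x (hDder x)
    have := (hasDerivAt_const x (u₀ + Real.log (2 - a))).sub hlog
    rw [zero_sub, ← div_eq_inv_mul] at this
    exact this
  have hderivU : deriv U = fun x => -(S x / D x) := funext fun x => (hUder x).deriv
  have hSder : ∀ x, HasDerivAt S ((1 - a) * (Real.cosh (k * (x - x₀)) * k * k)) x := by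
    intro x
    simpa [hS_def, mul_assoc] using
      ((((Real.hasDerivAt_sinh (k * (x - x₀))).comp x (hlin x)).mul_const k).const_mul (1 - a))
  have hderiv2 : ∀ x, deriv (deriv U) x =
      -(((1 - a) * (Real.cosh (k * (x - x₀)) * k * k) * D x - S x * S x) / (D x) ^ 2) := by
    intro x
    rw [hderivU]
    have h := (((hSder x).div (hDder x) (hD0 x).ne')).neg
    exact h.deriv
  refine ⟨?_, ?_, ?_, ?_, ?_, ?_, ?_⟩
  · -- evenness
    intro x
    simp only [hU_def, hD_def]
    rw [show k * (x₀ + x - x₀) = k * x by ring, show k * (x₀ - x - x₀) = -(k * x) by ring,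
      Real.cosh_neg]
  · -- ContDiff
    have hDcd : ContDiff ℝ 2 D :=
      contDiff_const.add (contDiff_const.mul
        (Real.contDiff_cosh.comp (contDiff_const.mul (contDiff_id.sub contDiff_const))))
    rw [contDiff_iff_contDiffAt]
    intro x
    exact contDiffAt_const.sub ((Real.contDiffAt_log.mpr (hD0 x).ne').comp x hDcd.contDiffAt)
  · -- the ODE
    intro x
    rw [hderiv2 x, hexp x]
    have hch : Real.cosh (k * (x - x₀)) ^ 2 - Real.sinh (k * (x - x₀)) ^ 2 = 1 :=
      Real.cosh_sq_sub_sinh_sq _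
    have hDx : D x = 1 + (1 - a) * Real.cosh (k * (x - x₀)) := rfl
    have hSx : S x = (1 - a) * (Real.sinh (k * (x - x₀)) * k) := rfl
    have key : (1 - a) * (Real.cosh (k * (x - x₀)) * k * k) * D x - S x * S x
        = k ^ 2 * (D x - a * (2 - a)) := by
      rw [hDx, hSx]
      linear_combination ((1 - a) ^ 2 * k ^ 2) * hch
    rw [key, hk2]
    have hDne := (hD0 x).ne'
    field_simp
    ring
  · -- max
    intro x
    have h : Real.log (2 - a) ≤ Real.log (D x) :=
      Real.log_le_log (by linarith) (hD1 x)
    show u₀ + Real.log (2 - a) - Real.log (D x) ≤ u₀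
    linarith
  · -- value at x₀
    show u₀ + Real.log (2 - a) - Real.log (D x₀) = u₀
    have hx : D x₀ = 2 - a := by
      simp only [hD_def]
      rw [sub_self, mul_zero, Real.cosh_zero]
      ring
    rw [hx]
    ring
  · -- atTop
    have h0 : Tendsto (fun x : ℝ => x - x₀) atTop atTop :=
      (tendsto_atTop_add_const_right atTop (-x₀) tendsto_id).congr
        (fun x => by simp only [id_eq]; ring)
    have h1 : Tendsto (fun x => k * (x - x₀)) atTop atTop := h0.const_mul_atTop hk0
    have h2 : Tendsto (fun x => Real.cosh (k * (x - x₀))) atTop atTop :=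
      tendsto_cosh_atTop'.comp h1
    have h3 : Tendsto D atTop atTop :=
      tendsto_atTop_add_const_left _ 1 (h2.const_mul_atTop hc0)
    have h4 : Tendsto (fun x => Real.log (D x)) atTop atTop :=
      Real.tendsto_log_atTop.comp h3
    have h5 : Tendsto U atTop atBot := by
      simp only [hU_def, sub_eq_add_neg]
      exact tendsto_atBot_add_const_left _ _ (tendsto_neg_atTop_atBot.comp h4)
    exact h5
  · -- atBot
    have h0 : Tendsto (fun x : ℝ => x - x₀) atBot atBot :=
      (tendsto_atBot_add_const_right atBot (-x₀) tendsto_id).congr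
        (fun x => by simp only [id_eq]; ring)
    have h1 : Tendsto (fun x => k * (x - x₀)) atBot atBot := h0.const_mul_atBot hk0
    have hcb : Tendsto Real.cosh atBot atTop := by
      have := tendsto_cosh_atTop'.comp tendsto_neg_atBot_atTop
      refine this.congr (fun y => ?_)
      simp [Function.comp, Real.cosh_neg]
    have h2 : Tendsto (fun x => Real.cosh (k * (x - x₀))) atBot atTop := hcb.comp h1
    have h3 : Tendsto D atBot atTop :=
      tendsto_atTop_add_const_left _ 1 (h2.const_mul_atTop hc0)
    have h4 : Tendsto (fun x => Real.log (D x)) atBot atTop :=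
      Real.tendsto_log_atTop.comp h3
    have h5 : Tendsto U atBot atBot := by
      simp only [hU_def, sub_eq_add_neg]
      exact tendsto_atBot_add_const_left _ _ (tendsto_neg_atTop_atBot.comp h4)
    exact h5
end

section
/- Let λ > 0, γ > 0, and let U₁, U₂ : ℝ → ℝ be bounded C² functions satisfying U₁'' = λ(e^{U₁+U₂} + e^{U₁-U₂} - 2) and U₂'' = λγ·e^{U₁}(e^{U₂} - e^{-U₂}) on ℝ with U₁(±∞) = U₂(±∞) = 0 and U₁'(±∞) = U₂'(±∞) = 0. Then U₁ ≡ 0 and U₂ ≡ 0. -/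
open Real Filter

/-- Maximum principle: a C² function tending to 0 at both ends whose second derivative
is nonnegative wherever the function is positive must be nonpositive. -/
lemma maxprin (f : ℝ → ℝ) (hf : ContDiff ℝ 2 f)
    (ht : Tendsto f atTop (nhds 0)) (hb : Tendsto f atBot (nhds 0))
    (hpos : ∀ x, 0 < f x → 0 ≤ deriv (deriv f) x) : ∀ x, f x ≤ 0 := by
  by_contra h
  push_neg at h
  obtain ⟨x₀, hx₀⟩ := h
  -- global max exists
  have hco : ∀ᶠ x in cocompact ℝ, f x ≤ f x₀ := by
    rw [cocompact_eq_atBot_atTop]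
    exact Filter.eventually_sup.2 ⟨(hb.eventually_lt_const hx₀).mono fun _ h => h.le,
      (ht.eventually_lt_const hx₀).mono fun _ h => h.le⟩
  obtain ⟨z, hz⟩ := hf.continuous.exists_forall_ge' x₀ hco
  set s := f z with hs_def
  have hs : 0 < s := lt_of_lt_of_le hx₀ (hz x₀)
  have hs2 : 0 < s / 2 := half_pos hs
  have hcl : ∀ c : ℝ, IsClosed {x : ℝ | f x ≤ s / 2} :=
    fun c => isClosed_le hf.continuous continuous_const
  -- left boundary point
  set L : Set ℝ := {x | x ≤ z ∧ f x ≤ s / 2} with hL_def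
  have hLclosed : IsClosed L := (isClosed_le continuous_id continuous_const).inter (hcl 0)
  have hLne : L.Nonempty := by
    have h1 : ∀ᶠ x in atBot, f x < s / 2 := hb.eventually_lt_const hs2
    have h2 : ∀ᶠ x in atBot, x ≤ z := eventually_le_atBot z
    obtain ⟨x, hx1, hx2⟩ := (h1.and h2).exists
    exact ⟨x, hx2, hx1.le⟩
  have hLbdd : BddAbove L := ⟨z, fun x hx => hx.1⟩
  set a := sSup L with ha_def
  have haL : a ∈ L := hLclosed.csSup_mem hLne hLbdd
  have haz : a < z := lt_of_le_of_ne haL.1 (by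
    intro hh; have := haL.2; rw [hh] at this; linarith)
  -- right boundary point
  set R : Set ℝ := {x | z ≤ x ∧ f x ≤ s / 2} with hR_def
  have hRclosed : IsClosed R := (isClosed_le continuous_const continuous_id).inter (hcl 0)
  have hRne : R.Nonempty := by
    have h1 : ∀ᶠ x in atTop, f x < s / 2 := ht.eventually_lt_const hs2
    have h2 : ∀ᶠ x in atTop, z ≤ x := eventually_ge_atTop z
    obtain ⟨x, hx1, hx2⟩ := (h1.and h2).exists
    exact ⟨x, hx2, hx1.le⟩
  have hRbdd : BddBelow R := ⟨z, fun x hx => hx.1⟩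
  set b := sInf R with hb_def
  have hbR : b ∈ R := hRclosed.csInf_mem hRne hRbdd
  have hzb : z < b := lt_of_le_of_ne hbR.1 (by
    intro hh; have := hbR.2; rw [← hh] at this; linarith)
  -- on (a,b), f > s/2
  have key : ∀ x ∈ Set.Ioo a b, s / 2 < f x := by
    rintro x ⟨hax, hxb⟩
    by_contra hc
    push_neg at hc
    rcases le_total x z with hxz | hzx
    · exact absurd (le_csSup hLbdd ⟨hxz, hc⟩) (not_le_of_gt hax)
    · exact absurd (csInf_le hRbdd ⟨hzx, hc⟩) (not_le_of_gt hxb)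
  -- convexity on [a,b]
  have hdiff : Differentiable ℝ f := hf.differentiable (by norm_num)
  have hf1 : ContDiff ℝ 1 (deriv f) := by
    have := (contDiff_succ_iff_deriv (n := 1)).1 (by exact_mod_cast hf)
    exact this.2.2
  have hconv : ConvexOn ℝ (Set.Icc a b) f := by
    apply convexOn_of_deriv2_nonneg (convex_Icc a b) hf.continuous.continuousOn
      hdiff.differentiableOn
      ((hf1.differentiable (by norm_num)).differentiableOn)
    intro x hx
    rw [interior_Icc] at hx
    have : 0 < f x := lt_trans hs2 (key x hx)
    have h2 := hpos x this
    simpa [Function.iterate_succ, Function.comp] using h2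
  have hzmem : z ∈ Set.Icc a b := ⟨haz.le, hzb.le⟩
  have hmax := hconv.le_max_of_mem_Icc (Set.left_mem_Icc.2 (haz.trans hzb).le)
    (Set.right_mem_Icc.2 (haz.trans hzb).le) hzmem
  have : s ≤ s / 2 := le_trans hmax (max_le haL.2 hbR.2)
  linarith

theorem stmt13 (lam γ : ℝ) (hlam : 0 < lam) (hγ : 0 < γ) (U₁ U₂ : ℝ → ℝ)
    (hU₁ : ContDiff ℝ 2 U₁) (hU₂ : ContDiff ℝ 2 U₂)
    (hb₁ : ∃ M : ℝ, ∀ x, |U₁ x| ≤ M) (hb₂ : ∃ M : ℝ, ∀ x, |U₂ x| ≤ M)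
    (heq₁ : ∀ x, deriv (deriv U₁) x =
      lam * (Real.exp (U₁ x + U₂ x) + Real.exp (U₁ x - U₂ x) - 2))
    (heq₂ : ∀ x, deriv (deriv U₂) x =
      lam * γ * Real.exp (U₁ x) * (Real.exp (U₂ x) - Real.exp (-U₂ x)))
    (t1 : Tendsto U₁ atTop (nhds 0)) (t2 : Tendsto U₁ atBot (nhds 0))
    (t3 : Tendsto U₂ atTop (nhds 0)) (t4 : Tendsto U₂ atBot (nhds 0))
    (t5 : Tendsto (deriv U₁) atTop (nhds 0)) (t6 : Tendsto (deriv U₁) atBot (nhds 0))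
    (t7 : Tendsto (deriv U₂) atTop (nhds 0)) (t8 : Tendsto (deriv U₂) atBot (nhds 0)) :
    (∀ x, U₁ x = 0) ∧ (∀ x, U₂ x = 0) := by
  have hdd_neg : ∀ f : ℝ → ℝ, ∀ x, deriv (deriv (fun y => -f y)) x = -deriv (deriv f) x := by
    intro f x
    have h1 : deriv (fun y => -f y) = fun y => -deriv f y := by
      funext y; exact deriv.neg
    rw [h1]; exact deriv.neg
  -- U₂ ≤ 0
  have hU₂le : ∀ x, U₂ x ≤ 0 := by
    apply maxprin U₂ hU₂ t3 t4
    intro x hx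
    rw [heq₂]
    have : Real.exp (-U₂ x) < Real.exp (U₂ x) := Real.exp_lt_exp.2 (by linarith)
    exact mul_nonneg (by positivity) (by linarith)
  -- U₂ ≥ 0
  have hU₂ge : ∀ x, 0 ≤ U₂ x := by
    have := maxprin (fun y => -U₂ y) hU₂.neg (by simpa using t3.neg) (by simpa using t4.neg) ?_
    · intro x; have := this x; simpa using this
    · intro x hx
      rw [hdd_neg U₂ x, heq₂]
      simp only [neg_lt, Left.nonneg_neg_iff] at hx ⊢
      have hlt : Real.exp (U₂ x) < Real.exp (-U₂ x) := Real.exp_lt_exp.2 (by simpa using hx)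
      have : Real.exp (U₂ x) - Real.exp (-U₂ x) < 0 := by linarith
      have hmul : lam * γ * Real.exp (U₁ x) * (Real.exp (U₂ x) - Real.exp (-U₂ x)) < 0 := by
        apply mul_neg_of_pos_of_neg (by positivity) this
      linarith
  have hU₂0 : ∀ x, U₂ x = 0 := fun x => le_antisymm (hU₂le x) (hU₂ge x)
  -- now U₁'' = lam*(2 exp(U₁) - 2)
  have heq₁' : ∀ x, deriv (deriv U₁) x = lam * (2 * Real.exp (U₁ x) - 2) := by
    intro x
    rw [heq₁ x, hU₂0 x]
    ring_nf
  have hU₁le : ∀ x, U₁ x ≤ 0 := by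
    apply maxprin U₁ hU₁ t1 t2
    intro x hx
    rw [heq₁' x]
    have h0 : Real.exp 0 < Real.exp (U₁ x) := Real.exp_lt_exp.2 hx
    have : (1:ℝ) < Real.exp (U₁ x) := by simpa using h0
    nlinarith
  have hU₁ge : ∀ x, 0 ≤ U₁ x := by
    have := maxprin (fun y => -U₁ y) hU₁.neg (by simpa using t1.neg) (by simpa using t2.neg) ?_
    · intro x; have := this x; simpa using this
    · intro x hx
      rw [hdd_neg U₁ x, heq₁' x]
      simp only [Left.nonneg_neg_iff] at hx ⊢
      have hlt : Real.exp (U₁ x) < 1 := Real.exp_lt_one_iff.2 (by simpa using hx)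
      nlinarith
  exact ⟨fun x => le_antisymm (hU₁le x) (hU₁ge x), hU₂0⟩
end

section
/- Let β > 0 and let h₀ : ℝ → ℝ be a continuous positive function with h₀(x) = e^{-β|x|} for |x| ≥ 1. Let u : ℝ → ℝ be absolutely continuous with ∫_ℝ (u')² dx = 1 and ∫_ℝ u·h₀ dx = 0. Then there is a constant C > 0 depending only on h₀ such that |u(x)| ≤ |x|^{1/2} + C for all x ∈ ℝ. -/
open Real MeasureTheory intervalIntegral Set
open scoped ENNReal NNReal

lemma integrable_exp_neg_abs' {b : ℝ} (hb : 0 < b) :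
    Integrable fun x : ℝ => Real.exp (-b * |x|) := by
  rw [← integrableOn_univ, ← @Iio_union_Ici _ _ (0 : ℝ), integrableOn_union,
    integrableOn_Ici_iff_integrableOn_Ioi]
  have h1 : IntegrableOn (fun x : ℝ => Real.exp (-b * |x|)) (Ioi 0) := by
    refine (exp_neg_integrableOn_Ioi 0 hb).congr_fun ?_ measurableSet_Ioi
    intro x hx
    simp [abs_of_pos (show (0:ℝ) < x from hx)]
  refine ⟨?_, h1⟩
  rw [← (Measure.measurePreserving_neg (volume : Measure ℝ)).integrableOn_comp_preimage
      (Homeomorph.neg ℝ).measurableEmbedding]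
  simpa [Function.comp_def, neg_preimage, neg_Iio, neg_zero, abs_neg] using h1

lemma cs_step {u : ℝ → ℝ}
    (hFTC : ∀ a b : ℝ, u b - u a = ∫ x in a..b, deriv u x)
    (hint : Integrable (fun x => (deriv u x) ^ 2))
    (hnorm : (∫ x : ℝ, (deriv u x) ^ 2) = 1) :
    ∀ a b : ℝ, |u b - u a| ≤ Real.sqrt |b - a| := by
  have key : ∀ a b : ℝ, a ≤ b → |u b - u a| ≤ Real.sqrt |b - a| := by
    intro a b hab
    set μ := volume.restrict (Ioc a b) with hμ
    haveI : IsFiniteMeasure μ := ⟨by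
      rw [hμ, Measure.restrict_apply_univ]
      simp [Real.volume_Ioc]⟩
    have hmeas : AEStronglyMeasurable (fun x => |deriv u x|) μ :=
      ((measurable_deriv u).abs).aestronglyMeasurable
    have hg : MemLp (fun x => |deriv u x|) (ENNReal.ofReal 2) μ := by
      have : (ENNReal.ofReal 2) = (2 : ℝ≥0∞) := by norm_num
      rw [this]
      refine (memLp_two_iff_integrable_sq hmeas).mpr ?_
      have : Integrable (fun x => (deriv u x) ^ 2) μ := hint.restrict
      exact this.congr (Filter.Eventually.of_forall fun x => by rw [sq_abs])
        |>.congr (Filter.Eventually.of_forall fun x => rfl)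
    have hf : MemLp (fun _ : ℝ => (1 : ℝ)) (ENNReal.ofReal 2) μ := memLp_const 1
    have hconj : Real.HolderConjugate 2 2 := ⟨by norm_num, by norm_num, by norm_num⟩
    have hCS := integral_mul_le_Lp_mul_Lq_of_nonneg (μ := μ) hconj
      (Filter.Eventually.of_forall fun _ => zero_le_one)
      (Filter.Eventually.of_forall fun x => abs_nonneg _) hf hg
    simp only [one_mul] at hCS
    have h1 : (∫ x, (1 : ℝ) ^ (2 : ℝ) ∂μ) = b - a := by
      simp [hμ, Real.volume_Ioc, ENNReal.toReal_ofReal (sub_nonneg.mpr hab), hab]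
    have h2 : (∫ x, |deriv u x| ^ (2 : ℝ) ∂μ) ≤ 1 := by
      have he : (∫ x, |deriv u x| ^ (2 : ℝ) ∂μ) = ∫ x in Ioc a b, (deriv u x) ^ 2 := by
        refine integral_congr_ae (Filter.Eventually.of_forall fun x => ?_)
        show |deriv u x| ^ (2:ℝ) = (deriv u x) ^ 2
        rw [Real.rpow_two, sq_abs]
      rw [he, ← hnorm]
      exact setIntegral_le_integral hint
        (Filter.Eventually.of_forall fun x => sq_nonneg _)
    have habs : |u b - u a| ≤ ∫ x, |deriv u x| ∂μ := by
      rw [hFTC a b, intervalIntegral.integral_of_le hab]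
      simpa [Real.norm_eq_abs] using
        MeasureTheory.norm_integral_le_integral_norm (μ := μ) (deriv u)
    have h3 : (∫ x, |deriv u x| ^ (2:ℝ) ∂μ) ^ ((1:ℝ)/2) ≤ 1 := by
      have h0 : (0:ℝ) ≤ ∫ x, |deriv u x| ^ (2:ℝ) ∂μ :=
        integral_nonneg fun x => Real.rpow_nonneg (abs_nonneg _) _
      calc (∫ x, |deriv u x| ^ (2:ℝ) ∂μ) ^ ((1:ℝ)/2) ≤ (1:ℝ) ^ ((1:ℝ)/2) :=
            Real.rpow_le_rpow h0 h2 (by norm_num)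
        _ = 1 := Real.one_rpow _
    have hle : (∫ x, |deriv u x| ∂μ) ≤ (b - a) ^ ((1:ℝ)/2) * 1 := by
      refine hCS.trans ?_
      rw [h1]
      exact mul_le_mul_of_nonneg_left h3
        (Real.rpow_nonneg (sub_nonneg.mpr hab) _)
    calc |u b - u a| ≤ (b - a) ^ ((1:ℝ)/2) * 1 := habs.trans hle
      _ = Real.sqrt |b - a| := by
          rw [mul_one, ← Real.sqrt_eq_rpow, abs_of_nonneg (sub_nonneg.mpr hab)]
  intro a b
  rcases le_total a b with h | h
  · exact key a b h
  · have := key b a h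
    rwa [abs_sub_comm (u a) (u b), abs_sub_comm a b] at this

lemma sqrt_add_le'' (a b : ℝ) (ha : 0 ≤ a) (hb : 0 ≤ b) :
    Real.sqrt (a + b) ≤ Real.sqrt a + Real.sqrt b := by
  rw [show Real.sqrt a + Real.sqrt b = Real.sqrt ((Real.sqrt a + Real.sqrt b)^2) from
    (Real.sqrt_sq (by positivity)).symm]
  apply Real.sqrt_le_sqrt
  nlinarith [Real.sq_sqrt ha, Real.sq_sqrt hb, Real.sqrt_nonneg a, Real.sqrt_nonneg b]

lemma sqrt_le_exp {t : ℝ} (ht : 0 ≤ t) : Real.sqrt t ≤ Real.exp t := by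
  have h1 : Real.sqrt t ≤ 1 + t := by
    nlinarith [Real.sq_sqrt ht, Real.sqrt_nonneg t]
  have h2 : t + 1 ≤ Real.exp t := Real.add_one_le_exp t
  linarith

theorem stmt15 (β : ℝ) (hβ : 0 < β) (h₀ : ℝ → ℝ)
    (hc : Continuous h₀) (hpos : ∀ x, 0 < h₀ x)
    (hform : ∀ x : ℝ, 1 ≤ |x| → h₀ x = Real.exp (-β * |x|)) :
    ∃ C > 0, ∀ u : ℝ → ℝ,
      Differentiable ℝ u →
      (∀ a b : ℝ, u b - u a = ∫ x in a..b, deriv u x) →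
      Integrable (fun x => (deriv u x) ^ 2) →
      (∫ x : ℝ, (deriv u x) ^ 2) = 1 →
      Integrable (fun x => u x * h₀ x) →
      (∫ x : ℝ, u x * h₀ x) = 0 →
      ∀ x : ℝ, |u x| ≤ Real.sqrt |x| + C := by
  -- bound h₀ by K * exp (-β |x|)
  obtain ⟨S, hS⟩ := (isCompact_Icc (a := (-1:ℝ)) (b := 1)).exists_bound_of_continuousOn
    hc.continuousOn
  have hS0 : 0 ≤ S := le_trans (norm_nonneg _) (hS 0 (by norm_num))
  set K : ℝ := max (S * Real.exp β) 1 with hK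
  have hK1 : (1:ℝ) ≤ K := le_max_right _ _
  have hK0 : 0 < K := lt_of_lt_of_le one_pos hK1
  have hbound : ∀ x : ℝ, h₀ x ≤ K * Real.exp (-β * |x|) := by
    intro x
    rcases le_or_gt 1 |x| with h | h
    · rw [hform x h]
      nlinarith [Real.exp_pos (-β * |x|)]
    · have hx : x ∈ Icc (-1:ℝ) 1 := abs_le.mp h.le
      have h1 : h₀ x ≤ S := le_trans (le_abs_self _) (hS x hx)
      have h2 : Real.exp (-β) ≤ Real.exp (-β * |x|) := by
        apply Real.exp_le_exp.mpr
        nlinarith [abs_nonneg x]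
      have h3 : S ≤ S * Real.exp β * Real.exp (-β * |x|) := by
        calc S = S * Real.exp β * Real.exp (-β) := by
              rw [mul_assoc, ← Real.exp_add]; simp
          _ ≤ S * Real.exp β * Real.exp (-β * |x|) :=
              mul_le_mul_of_nonneg_left h2 (by positivity)
      calc h₀ x ≤ S := h1
        _ ≤ S * Real.exp β * Real.exp (-β * |x|) := h3
        _ ≤ K * Real.exp (-β * |x|) :=
            mul_le_mul_of_nonneg_right (le_max_left _ _) (Real.exp_pos _).le
  -- integrability of h₀
  have hInth : Integrable h₀ := by
    refine ((integrable_exp_neg_abs' hβ).const_mul K).mono' hc.aestronglyMeasurable ?_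
    refine Filter.Eventually.of_forall fun x => ?_
    rw [Real.norm_eq_abs, abs_of_pos (hpos x)]
    exact hbound x
  set M : ℝ := ∫ x, h₀ x with hM
  have hM0 : 0 < M := by
    rw [hM]
    rw [integral_pos_iff_support_of_nonneg_ae
      (Filter.Eventually.of_forall fun x => (hpos x).le) hInth]
    have : Function.support h₀ = Set.univ := by
      ext x; simp [Function.support, (hpos x).ne']
    rw [this]
    simp [Real.volume_univ]
  -- integrability of sqrt|y| * h₀ y
  have hsqrt_bound : ∀ y : ℝ, Real.sqrt |y| * h₀ y
      ≤ (K * Real.sqrt (2/β)) * Real.exp (-(β/2) * |y|) := by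
    intro y
    have h1 : Real.sqrt |y| ≤ Real.sqrt (2/β) * Real.exp ((β/2) * |y|) := by
      have e : Real.sqrt |y| = Real.sqrt (2/β) * Real.sqrt ((β/2) * |y|) := by
        rw [← Real.sqrt_mul (by positivity)]
        congr 1
        field_simp
      rw [e]
      exact mul_le_mul_of_nonneg_left (sqrt_le_exp (by positivity)) (Real.sqrt_nonneg _)
    calc Real.sqrt |y| * h₀ y ≤ (Real.sqrt (2/β) * Real.exp ((β/2) * |y|)) *
            (K * Real.exp (-β * |y|)) := by
          apply mul_le_mul h1 (hbound y) (hpos y).le (by positivity)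
      _ = (K * Real.sqrt (2/β)) * Real.exp (-(β/2) * |y|) := by
          have e : Real.exp ((β/2) * |y|) * Real.exp (-β * |y|)
              = Real.exp (-(β/2) * |y|) := by
            rw [← Real.exp_add]; congr 1; ring
          rw [← e]; ring
  have hIntsqrt : Integrable (fun y => Real.sqrt |y| * h₀ y) := by
    refine ((integrable_exp_neg_abs' (by positivity : (0:ℝ) < β/2)).const_mul
      (K * Real.sqrt (2/β))).mono'
      ((continuous_abs.sqrt.mul hc).aestronglyMeasurable) ?_
    refine Filter.Eventually.of_forall fun y => ?_
    rw [Real.norm_eq_abs, abs_of_nonneg (mul_nonneg (Real.sqrt_nonneg _) (hpos y).le)]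
    exact hsqrt_bound y
  set I : ℝ := ∫ y, Real.sqrt |y| * h₀ y with hI
  have hI0 : 0 ≤ I := integral_nonneg fun y => mul_nonneg (Real.sqrt_nonneg _) (hpos y).le
  refine ⟨I / M + 1, by positivity, ?_⟩
  intro u hu hFTC hint hnorm hIntuh hmean x
  have hcs := cs_step hFTC hint hnorm
  have hucont : Continuous u := hu.continuous
  -- key identity : u x * M = ∫ y, (u x - u y) * h₀ y
  have hid : u x * M = ∫ y, (u x - u y) * h₀ y := by
    have : (fun y => (u x - u y) * h₀ y) = fun y => u x * h₀ y - u y * h₀ y := by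
      ext y; ring
    rw [this, integral_sub (hInth.const_mul (u x)) hIntuh, hmean, sub_zero,
      MeasureTheory.integral_const_mul]
  have hIntdiff : Integrable (fun y => (u x - u y) * h₀ y) := by
    have : (fun y => (u x - u y) * h₀ y) = fun y => u x * h₀ y - u y * h₀ y := by
      ext y; ring
    rw [this]
    exact (hInth.const_mul (u x)).sub hIntuh
  have hmid : Integrable (fun y => Real.sqrt |x - y| * h₀ y) := by
    refine ((hInth.const_mul (Real.sqrt |x|)).add hIntsqrt).mono'
      (((continuous_const.sub continuous_id).abs.sqrt.mul hc).aestronglyMeasurable) ?_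
    refine Filter.Eventually.of_forall fun y => ?_
    rw [Real.norm_eq_abs, abs_of_nonneg (mul_nonneg (Real.sqrt_nonneg _) (hpos y).le)]
    have h1 : Real.sqrt |x - y| ≤ Real.sqrt |x| + Real.sqrt |y| := by
      refine le_trans (Real.sqrt_le_sqrt (abs_sub _ _)) ?_
      exact sqrt_add_le'' _ _ (abs_nonneg _) (abs_nonneg _)
    calc Real.sqrt |x - y| * h₀ y ≤ (Real.sqrt |x| + Real.sqrt |y|) * h₀ y :=
          mul_le_mul_of_nonneg_right h1 (hpos y).le
      _ = Real.sqrt |x| * h₀ y + Real.sqrt |y| * h₀ y := by ring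
  have key : |u x| * M ≤ Real.sqrt |x| * M + I := by
    have h1 : |u x * M| ≤ ∫ y, |u x - u y| * |h₀ y| := by
      rw [hid]
      simpa [Real.norm_eq_abs, abs_mul] using
        MeasureTheory.norm_integral_le_integral_norm (μ := volume)
          (fun y => (u x - u y) * h₀ y)
    have h2 : (∫ y, |u x - u y| * |h₀ y|) ≤ ∫ y, Real.sqrt |x - y| * h₀ y := by
      refine integral_mono
        (hIntdiff.abs.congr (Filter.Eventually.of_forall fun y => abs_mul _ _))
        hmid fun y => ?_
      rw [abs_of_pos (hpos y)]
      exact mul_le_mul_of_nonneg_right (hcs y x) (hpos y).le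
    have h3 : (∫ y, Real.sqrt |x - y| * h₀ y)
        ≤ ∫ y, (Real.sqrt |x| * h₀ y + Real.sqrt |y| * h₀ y) := by
      refine integral_mono hmid ((hInth.const_mul _).add hIntsqrt) fun y => ?_
      have h1 : Real.sqrt |x - y| ≤ Real.sqrt |x| + Real.sqrt |y| := by
        refine le_trans (Real.sqrt_le_sqrt (abs_sub _ _)) ?_
        exact sqrt_add_le'' _ _ (abs_nonneg _) (abs_nonneg _)
      calc Real.sqrt |x - y| * h₀ y ≤ (Real.sqrt |x| + Real.sqrt |y|) * h₀ y :=
            mul_le_mul_of_nonneg_right h1 (hpos y).le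
        _ = _ := by ring
    have h4 : (∫ y, (Real.sqrt |x| * h₀ y + Real.sqrt |y| * h₀ y))
        = Real.sqrt |x| * M + I := by
      rw [integral_add (hInth.const_mul _) hIntsqrt, MeasureTheory.integral_const_mul]
    calc |u x| * M = |u x * M| := by
          rw [abs_mul, abs_of_pos hM0]
      _ ≤ _ := h1.trans (h2.trans (h3.trans_eq h4))
  have hfin : |u x| ≤ Real.sqrt |x| + I / M := by
    have h5 : |u x| ≤ (Real.sqrt |x| * M + I) / M := by
      rw [le_div_iff₀ hM0]; exact key
    have h6 : (Real.sqrt |x| * M + I) / M = Real.sqrt |x| + I / M := by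
      field_simp
    linarith [h5, h6.le, h6.ge]
  linarith
end

section
/- Let β > 0 and h₀ : ℝ → ℝ be continuous positive with h₀(x) = e^{-β|x|} for |x| ≥ 1, and dμ = h₀ dx. For any 0 < b < β there exists K > 0 such that for every absolutely continuous u with ∫(u')² dx = 1 and ∫ u dμ = 0, one has ∫_ℝ e^{b·u²} dμ ≤ K. -/
open Real MeasureTheory intervalIntegral Set
open scoped Interval

lemma aux_sqrt_le_exp (r : ℝ) : Real.sqrt r ≤ Real.exp r := by
  rw [Real.sqrt_le_left (Real.exp_pos r).le]
  nlinarith [Real.add_one_le_exp r, Real.exp_pos r, sq_nonneg (r + 1)]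

lemma aux_exp_abs_integrable {δ : ℝ} (hδ : 0 < δ) :
    Integrable (fun x : ℝ => Real.exp (-δ * |x|)) := by
  have hIoi : IntegrableOn (fun x : ℝ => Real.exp (-δ * |x|)) (Ioi 0) := by
    refine (exp_neg_integrableOn_Ioi 0 hδ).congr_fun (fun x hx => ?_) measurableSet_Ioi
    rw [abs_of_pos hx]
  have hIio : IntegrableOn (fun x : ℝ => Real.exp (-δ * |x|)) (Iio 0) := by
    have h1 : Integrable ((Set.Ioi (0:ℝ)).indicator fun x => Real.exp (-δ * |x|)) :=
      (integrable_indicator_iff measurableSet_Ioi).2 hIoi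
    have h2 := h1.comp_neg
    have h3 : (fun x : ℝ => (Set.Ioi (0:ℝ)).indicator (fun y => Real.exp (-δ * |y|)) (-x))
        = (Set.Iio (0:ℝ)).indicator fun x => Real.exp (-δ * |x|) := by
      funext x
      by_cases hx : x < 0
      · have h4 : -x ∈ Set.Ioi (0:ℝ) := by simpa using hx
        have h5 : x ∈ Set.Iio (0:ℝ) := hx
        rw [Set.indicator_of_mem h4, Set.indicator_of_mem h5, abs_neg]
      · have h4 : -x ∉ Set.Ioi (0:ℝ) := by simpa using hx
        have h5 : x ∉ Set.Iio (0:ℝ) := hx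
        rw [Set.indicator_of_notMem h4, Set.indicator_of_notMem h5]
    rw [h3] at h2
    exact (integrable_indicator_iff measurableSet_Iio).1 h2
  have h4 : IntegrableOn (fun x : ℝ => Real.exp (-δ * |x|)) (Iio 0 ∪ Ici 0) :=
    hIio.union ((integrableOn_Ici_iff_integrableOn_Ioi (by finiteness)).2 hIoi)
  rw [Set.Iio_union_Ici] at h4
  exact integrableOn_univ.1 h4

set_option maxHeartbeats 1600000 in
theorem stmt16 (β : ℝ) (hβ : 0 < β) (h₀ : ℝ → ℝ)
    (hc : Continuous h₀) (hpos : ∀ x, 0 < h₀ x)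
    (hform : ∀ x : ℝ, 1 ≤ |x| → h₀ x = Real.exp (-β * |x|))
    (b : ℝ) (hb : 0 < b) (hbβ : b < β) :
    ∃ K > 0, ∀ u : ℝ → ℝ,
      Differentiable ℝ u →
      (∀ a b' : ℝ, u b' - u a = ∫ x in a..b', deriv u x) →
      Integrable (fun x => (deriv u x) ^ 2) →
      (∫ x : ℝ, (deriv u x) ^ 2) = 1 →
      Integrable (fun x => u x * h₀ x) →
      (∫ x : ℝ, u x * h₀ x) = 0 →
      (∫⁻ x : ℝ, ENNReal.ofReal (Real.exp (b * (u x) ^ 2) * h₀ x)) ≤ ENNReal.ofReal K := by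
  -- master integrability lemma
  have hmaster : ∀ c : ℝ, c < β → Integrable (fun x => Real.exp (c * |x|) * h₀ x) := by
    intro c hcβ
    have hδ : 0 < β - c := by linarith
    have hcont : Continuous fun x : ℝ => Real.exp (c * |x|) * h₀ x :=
      ((Real.continuous_exp.comp (continuous_const.mul continuous_abs))).mul hc
    obtain ⟨D₀, hD₀⟩ := (isCompact_Icc (a := (-1:ℝ)) (b := 1)).exists_bound_of_continuousOn
      hcont.continuousOn
    have hD₀0 : 0 ≤ D₀ := le_trans (norm_nonneg _) (hD₀ 0 (by norm_num))
    set D := max (D₀ * Real.exp (β - c)) 1 with hD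
    have hD1 : (1:ℝ) ≤ D := le_max_right _ _
    refine ((aux_exp_abs_integrable hδ).const_mul D).mono' hcont.aestronglyMeasurable
      (Filter.Eventually.of_forall fun x => ?_)
    rw [Real.norm_of_nonneg (mul_nonneg (Real.exp_pos _).le (hpos x).le)]
    by_cases hx : 1 ≤ |x|
    · rw [hform x hx, ← Real.exp_add]
      have he : c * |x| + -β * |x| = -(β - c) * |x| := by ring
      rw [he]
      nlinarith [Real.exp_pos (-(β - c) * |x|), hD1]
    · push_neg at hx
      have hmem : x ∈ Set.Icc (-1:ℝ) 1 := abs_le.1 hx.le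
      have h1 : Real.exp (c * |x|) * h₀ x ≤ D₀ :=
        le_trans (le_abs_self _) (hD₀ x hmem)
      have h2 : Real.exp (-(β - c)) ≤ Real.exp (-(β - c) * |x|) :=
        Real.exp_le_exp.2 (by nlinarith [abs_nonneg x, abs_le.1 hx.le])
      have h3 : D₀ = D₀ * Real.exp (β - c) * Real.exp (-(β - c)) := by
        rw [mul_assoc, ← Real.exp_add]; simp
      calc Real.exp (c * |x|) * h₀ x ≤ D₀ := h1
        _ = D₀ * Real.exp (β - c) * Real.exp (-(β - c)) := h3
        _ ≤ D * Real.exp (-(β - c)) :=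
            mul_le_mul_of_nonneg_right (le_max_left _ _) (Real.exp_pos _).le
        _ ≤ D * Real.exp (-(β - c) * |x|) :=
            mul_le_mul_of_nonneg_left h2 (le_trans zero_le_one hD1)
  have hh₀int : Integrable h₀ := by
    have := hmaster 0 hβ
    simpa using this
  have hsqrtint : Integrable (fun x => Real.sqrt |x| * h₀ x) := by
    have hβ2 : (0:ℝ) < β / 2 := by linarith
    have hs : 0 < Real.sqrt (β / 2) := Real.sqrt_pos.2 hβ2
    have h2 : Integrable
        (fun x => (Real.sqrt (β/2))⁻¹ * (Real.exp ((β/2) * |x|) * h₀ x)) :=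
      (hmaster (β/2) (by linarith)).const_mul _
    refine h2.mono' (((Real.continuous_sqrt.comp continuous_abs)).mul hc).aestronglyMeasurable
      (Filter.Eventually.of_forall fun x => ?_)
    rw [Real.norm_of_nonneg (mul_nonneg (Real.sqrt_nonneg _) (hpos x).le)]
    have key : Real.sqrt |x| ≤ (Real.sqrt (β/2))⁻¹ * Real.exp ((β/2) * |x|) := by
      rw [← div_eq_inv_mul, le_div_iff₀ hs]
      calc Real.sqrt |x| * Real.sqrt (β/2) = Real.sqrt (|x| * (β/2)) :=
            (Real.sqrt_mul (abs_nonneg x) _).symm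
        _ ≤ Real.exp (|x| * (β/2)) := aux_sqrt_le_exp _
        _ = Real.exp ((β/2) * |x|) := by rw [mul_comm]
    calc Real.sqrt |x| * h₀ x
        ≤ ((Real.sqrt (β/2))⁻¹ * Real.exp ((β/2) * |x|)) * h₀ x :=
          mul_le_mul_of_nonneg_right key (hpos x).le
      _ = (Real.sqrt (β/2))⁻¹ * (Real.exp ((β/2) * |x|) * h₀ x) := by ring
  -- parameters
  set ε := (β - b) / (2 * b) with hεdef
  have hε : 0 < ε := div_pos (by linarith) (by linarith)
  set b₂ := b * (1 + ε) with hb₂def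
  have hb₂β : b₂ < β := by
    have : b₂ = (b + β) / 2 := by
      rw [hb₂def, hεdef]; field_simp; ring
    rw [this]; linarith
  have hg₂ : Integrable (fun x => Real.exp (b₂ * |x|) * h₀ x) := hmaster b₂ hb₂β
  -- constants
  set I := ∫ x, h₀ x with hIdef
  have hI : 0 < I := by
    have h01 : (0:ℝ) < ∫ x in (0:ℝ)..1, h₀ x :=
      intervalIntegral_pos_of_pos (hc.intervalIntegrable 0 1) hpos one_pos
    have h02 : (∫ x in (0:ℝ)..1, h₀ x) = ∫ x in Set.Ioc (0:ℝ) 1, h₀ x :=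
      intervalIntegral.integral_of_le zero_le_one
    have h03 : (∫ x in Set.Ioc (0:ℝ) 1, h₀ x) ≤ I :=
      setIntegral_le_integral hh₀int (Filter.Eventually.of_forall fun x => (hpos x).le)
    rw [h02] at h01; linarith
  set C₀ := ∫ x, Real.sqrt |x| * h₀ x with hC₀def
  have hC₀ : 0 ≤ C₀ :=
    integral_nonneg fun x => mul_nonneg (Real.sqrt_nonneg _) (hpos x).le
  set C := C₀ / I with hCdef
  have hC : 0 ≤ C := div_nonneg hC₀ hI.le
  set M := b * C ^ 2 * (1 + 1 / ε) with hMdef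
  set J := ∫ x, Real.exp (b₂ * |x|) * h₀ x with hJdef
  have hJ : 0 ≤ J :=
    integral_nonneg fun x => mul_nonneg (Real.exp_pos _).le (hpos x).le
  refine ⟨Real.exp M * (J + 1), mul_pos (Real.exp_pos _) (by linarith), ?_⟩
  intro u hdiff hFTC hint hnorm hμint hμzero
  -- pointwise bound |u y - u 0| ≤ √|y|
  have hbd : ∀ y : ℝ, |u y - u 0| ≤ Real.sqrt |y| := by
    intro y
    rcases eq_or_ne y 0 with rfl | hy
    · simp
    have hys : 0 < |y| := abs_pos.2 hy
    set s := Real.sqrt |y| with hs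
    have hs0 : 0 < s := Real.sqrt_pos.2 hys
    rw [hFTC 0 y]
    have h1 : |∫ x in (0:ℝ)..y, deriv u x| ≤ ∫ x in Ι (0:ℝ) y, |deriv u x| := by
      simpa [Real.norm_eq_abs] using
        intervalIntegral.norm_integral_le_integral_norm_uIoc
          (f := deriv u) (a := 0) (b := y) (μ := volume)
    refine h1.trans ?_
    have hIfin : volume (Ι (0:ℝ) y) < ⊤ := by
      rw [Set.uIoc]; exact measure_Ioc_lt_top
    have hsqon : IntegrableOn (fun x => deriv u x ^ 2) (Ι (0:ℝ) y) := hint.integrableOn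
    have hgint : IntegrableOn (fun x => (s * deriv u x ^ 2 + 1 / s) / 2) (Ι (0:ℝ) y) :=
      ((hsqon.const_mul s).add (integrableOn_const hIfin.ne)).div_const 2
    have hpt : ∀ x : ℝ, |deriv u x| ≤ (s * deriv u x ^ 2 + 1 / s) / 2 := by
      intro x
      have h2 := sq_nonneg (s * |deriv u x| - 1)
      have expand : (s * deriv u x ^ 2 + 1 / s) / 2 = (s ^ 2 * deriv u x ^ 2 + 1) / (2 * s) := by
        field_simp
      rw [expand, le_div_iff₀ (by positivity)]
      nlinarith [sq_abs (deriv u x)]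
    have habs : IntegrableOn (fun x => |deriv u x|) (Ι (0:ℝ) y) := by
      refine hgint.mono' ((measurable_deriv u).abs.aestronglyMeasurable) ?_
      exact Filter.Eventually.of_forall fun x => by
        simpa [abs_abs] using hpt x
    have hvol : (volume (Ι (0:ℝ) y)).toReal = |y| := by
      rw [Set.uIoc, Real.volume_Ioc, max_sub_min_eq_abs, ENNReal.toReal_ofReal (abs_nonneg _)]
      simp
    have hsq1 : (∫ x in Ι (0:ℝ) y, deriv u x ^ 2) ≤ 1 := by
      rw [← hnorm]
      exact setIntegral_le_integral hint (Filter.Eventually.of_forall fun x => sq_nonneg _)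
    calc (∫ x in Ι (0:ℝ) y, |deriv u x|)
        ≤ ∫ x in Ι (0:ℝ) y, (s * deriv u x ^ 2 + 1 / s) / 2 :=
          setIntegral_mono_on habs hgint measurableSet_uIoc fun x _ => hpt x
      _ = ((s * ∫ x in Ι (0:ℝ) y, deriv u x ^ 2) + (volume (Ι (0:ℝ) y)).toReal * (1 / s)) / 2 := by
          rw [MeasureTheory.integral_div, integral_add (hsqon.const_mul s)
            (integrableOn_const hIfin.ne), MeasureTheory.integral_const_mul, setIntegral_const,
            smul_eq_mul, measureReal_def]
      _ ≤ (s * 1 + |y| * (1 / s)) / 2 := by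
          rw [hvol]
          have := mul_le_mul_of_nonneg_left hsq1 hs0.le
          linarith
      _ = s := by
          have h4 : |y| = s * s := (Real.mul_self_sqrt (abs_nonneg y)).symm
          rw [mul_one, h4]; field_simp; norm_num
  -- bound |u 0| ≤ C
  have hbd0 : |u 0| ≤ C := by
    have hsub : Integrable (fun x => (u 0 - u x) * h₀ x) := by
      have h5 := (hh₀int.const_mul (u 0)).sub hμint
      refine h5.congr (Filter.Eventually.of_forall fun x => ?_)
      simp only [Pi.sub_apply]; ring
    have key : (∫ x, (u 0 - u x) * h₀ x) = u 0 * I := by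
      have h6 : (fun x => (u 0 - u x) * h₀ x) = fun x => u 0 * h₀ x - u x * h₀ x := by
        funext x; ring
      rw [h6, integral_sub (hh₀int.const_mul (u 0)) hμint, hμzero, sub_zero,
        MeasureTheory.integral_const_mul]
    have habs2 : |∫ x, (u 0 - u x) * h₀ x| ≤ C₀ := by
      refine le_trans ?_ (integral_mono hsub.abs hsqrtint fun x => ?_)
      · simpa only [Real.norm_eq_abs] using
          norm_integral_le_integral_norm (fun x => (u 0 - u x) * h₀ x) (μ := volume)
      · rw [abs_mul, abs_of_pos (hpos x)]
        exact mul_le_mul_of_nonneg_right (by rw [abs_sub_comm]; exact hbd x) (hpos x).le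
    rw [key, abs_mul, abs_of_pos hI] at habs2
    exact (le_div_iff₀ hI).2 habs2
  -- final pointwise bound
  have hfinal : ∀ x : ℝ, Real.exp (b * u x ^ 2) * h₀ x
      ≤ Real.exp M * (Real.exp (b₂ * |x|) * h₀ x) := by
    intro x
    have h1 : |u x| ≤ C + Real.sqrt |x| := by
      calc |u x| = |u 0 + (u x - u 0)| := by ring_nf
        _ ≤ |u 0| + |u x - u 0| := abs_add_le _ _
        _ ≤ C + Real.sqrt |x| := add_le_add hbd0 (hbd x)
    have hx2 : u x ^ 2 ≤ (C + Real.sqrt |x|) ^ 2 := by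
      calc u x ^ 2 = |u x| ^ 2 := (sq_abs _).symm
        _ ≤ (C + Real.sqrt |x|) ^ 2 := by
            apply pow_le_pow_left₀ (abs_nonneg _) h1
    have hsq : Real.sqrt |x| ^ 2 = |x| := Real.sq_sqrt (abs_nonneg x)
    have hkey : (C + Real.sqrt |x|) ^ 2 ≤ C ^ 2 * (1 + 1 / ε) + (1 + ε) * |x| := by
      have h3 := sq_nonneg (ε * Real.sqrt |x| - C)
      have h5 : 2 * C * Real.sqrt |x| * ε ≤ C ^ 2 + ε ^ 2 * Real.sqrt |x| ^ 2 := by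
        linarith [h3, sq_nonneg (ε * Real.sqrt |x| - C)]
      have h6 : 2 * C * Real.sqrt |x| ≤ (C ^ 2 + ε ^ 2 * Real.sqrt |x| ^ 2) / ε :=
        (le_div_iff₀ hε).2 h5
      have h7 : (C ^ 2 + ε ^ 2 * Real.sqrt |x| ^ 2) / ε
          = C ^ 2 * (1 / ε) + ε * Real.sqrt |x| ^ 2 := by
        field_simp
      rw [h7] at h6
      have h8 : (C + Real.sqrt |x|) ^ 2
          = C ^ 2 + 2 * C * Real.sqrt |x| + Real.sqrt |x| ^ 2 := by ring
      have h9 : ε * Real.sqrt |x| ^ 2 = ε * |x| := by rw [hsq]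
      linarith [h6, hsq, h8, h9]
    have h2 : b * u x ^ 2 ≤ M + b₂ * |x| := by
      have h5 : u x ^ 2 ≤ C ^ 2 * (1 + 1 / ε) + (1 + ε) * |x| := hx2.trans hkey
      have h6 := mul_le_mul_of_nonneg_left h5 hb.le
      rw [hMdef, hb₂def]; linarith [h6]
    calc Real.exp (b * u x ^ 2) * h₀ x
        ≤ Real.exp (M + b₂ * |x|) * h₀ x :=
          mul_le_mul_of_nonneg_right (Real.exp_le_exp.2 h2) (hpos x).le
      _ = Real.exp M * (Real.exp (b₂ * |x|) * h₀ x) := by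
          rw [Real.exp_add, mul_assoc]
  -- conclude via lintegral
  calc (∫⁻ x : ℝ, ENNReal.ofReal (Real.exp (b * u x ^ 2) * h₀ x))
      ≤ ∫⁻ x : ℝ, ENNReal.ofReal (Real.exp M * (Real.exp (b₂ * |x|) * h₀ x)) :=
        lintegral_mono fun x => ENNReal.ofReal_le_ofReal (hfinal x)
    _ = ENNReal.ofReal (∫ x : ℝ, Real.exp M * (Real.exp (b₂ * |x|) * h₀ x)) :=
        (ofReal_integral_eq_lintegral_ofReal (hg₂.const_mul _)
          (Filter.Eventually.of_forall fun x =>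
            mul_nonneg (Real.exp_pos _).le
              (mul_nonneg (Real.exp_pos _).le (hpos x).le))).symm
    _ ≤ ENNReal.ofReal (Real.exp M * (J + 1)) := by
        apply ENNReal.ofReal_le_ofReal
        rw [MeasureTheory.integral_const_mul, ← hJdef]
        linarith [Real.exp_pos M]
end

section
/- Let β > 0, h₀ continuous positive with h₀(x) = e^{-β|x|} for |x| ≥ 1, dμ = h₀ dx. For every a ∈ ℝ and b ∈ (0, β) there exists C(b) > 0 such that for all absolutely continuous v with v' ∈ L²(dx), v ∈ L²(dμ), and ∫ v dμ = 0: ∫_ℝ exp(a|v|) dμ ≤ C(b)·exp( (a²/(4b))·∫_ℝ (v')² dx ). -/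
open Real MeasureTheory intervalIntegral

lemma tm_exp_abs_integrable {d : ℝ} (hd : 0 < d) :
    Integrable (fun x : ℝ => Real.exp (-d * |x|)) := by
  have hIoi : IntegrableOn (fun x : ℝ => Real.exp (-d * |x|)) (Set.Ici 0) := by
    have h1 : IntegrableOn (fun x : ℝ => Real.exp (-d * x)) (Set.Ioi 0) :=
      exp_neg_integrableOn_Ioi 0 hd
    have h2 : IntegrableOn (fun x : ℝ => Real.exp (-d * |x|)) (Set.Ioi 0) := by
      apply h1.congr_fun _ measurableSet_Ioi
      intro x hx
      simp [abs_of_pos (show (0:ℝ) < x from hx)]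
    rwa [integrableOn_Ici_iff_integrableOn_Ioi]
  have hIio : IntegrableOn (fun x : ℝ => Real.exp (-d * |x|)) (Set.Iio 0) := by
    have h1 : IntegrableOn (fun x : ℝ => Real.exp (-d * |x|)) (Set.Ioi 0) :=
      hIoi.mono_set Set.Ioi_subset_Ici_self
    have key := (MeasurePreserving.integrableOn_comp_preimage
      (Measure.measurePreserving_neg (volume : Measure ℝ))
      (Homeomorph.neg ℝ).measurableEmbedding).2 h1
    have hpre : (Neg.neg : ℝ → ℝ) ⁻¹' (Set.Ioi 0) = Set.Iio 0 := by
      ext x; simp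
    rw [hpre] at key
    apply key.congr_fun _ measurableSet_Iio
    intro x _
    simp [abs_neg]
  have := hIio.union hIoi
  rwa [Set.Iio_union_Ici, integrableOn_univ] at this

lemma tm_g_integrable {β c : ℝ} (hcβ : c < β) {h₀ : ℝ → ℝ}
    (hcont : Continuous h₀)
    (hform : ∀ x : ℝ, 1 ≤ |x| → h₀ x = Real.exp (-β * |x|)) :
    Integrable (fun x : ℝ => Real.exp (c * |x|) * h₀ x) := by
  set d := β - c with hd_def
  have hd : 0 < d := by simp only [hd_def]; linarith
  have hgc : Continuous (fun x : ℝ => Real.exp (c * |x|) * h₀ x) :=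
    (Real.continuous_exp.comp (continuous_const.mul continuous_abs)).mul hcont
  obtain ⟨M, hM⟩ := (isCompact_Icc (a := (-1:ℝ)) (b := 1)).exists_bound_of_continuousOn
    hgc.continuousOn
  have hM0 : 0 ≤ M := le_trans (norm_nonneg _) (hM 0 (by norm_num))
  set M' := max 1 (M * Real.exp d) with hM'_def
  apply Integrable.mono' ((tm_exp_abs_integrable hd).const_mul M')
    hgc.aestronglyMeasurable
  filter_upwards with x
  rcases le_or_gt (|x|) 1 with hx | hx
  · have h1 : ‖Real.exp (c * |x|) * h₀ x‖ ≤ M := hM x (abs_le.1 hx)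
    have h2 : Real.exp (-d) ≤ Real.exp (-d * |x|) := by
      apply Real.exp_le_exp.2; nlinarith [abs_nonneg x]
    calc ‖Real.exp (c * |x|) * h₀ x‖ ≤ M := h1
      _ = (M * Real.exp d) * Real.exp (-d) := by
          rw [mul_assoc, ← Real.exp_add]; simp
      _ ≤ (M * Real.exp d) * Real.exp (-d * |x|) := by
          apply mul_le_mul_of_nonneg_left h2; positivity
      _ ≤ M' * Real.exp (-d * |x|) :=
          mul_le_mul_of_nonneg_right (le_max_right _ _) (Real.exp_nonneg _)
  · have h1 : Real.exp (c * |x|) * h₀ x = Real.exp (-d * |x|) := by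
      rw [hform x hx.le, ← Real.exp_add, hd_def]; ring_nf
    rw [h1, Real.norm_eq_abs, abs_of_nonneg (Real.exp_nonneg _)]
    nlinarith [Real.exp_nonneg (-d * |x|), le_max_left (1:ℝ) (M * Real.exp d)]

lemma tm_e1 (a b₁ x D2 : ℝ) (hb₁ : 0 < b₁) (ha : a ≠ 0) :
    |a| * ((2 * b₁ / |a|) / 2 * |x| + D2 / (2 * (2 * b₁ / |a|)))
      = b₁ * |x| + a ^ 2 / (4 * b₁) * D2 := by
  have hapos : 0 < |a| := abs_pos.2 ha
  rw [← sq_abs a]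
  field_simp
  ring

lemma tm_e2 (a δ J H D2 : ℝ) (hδ : 0 < δ) (hH : 0 < H) (ha : a ≠ 0) :
    |a| * ((|a| / (2 * δ)) / 2 * (J / H) + D2 / (2 * (|a| / (2 * δ))))
      = a ^ 2 / (4 * δ) * (J / H) + δ * D2 := by
  have hapos : 0 < |a| := abs_pos.2 ha
  rw [← sq_abs a]
  field_simp
  ring

set_option maxHeartbeats 1000000 in
theorem stmt17 (β : ℝ) (hβ : 0 < β) (h₀ : ℝ → ℝ)
    (hc : Continuous h₀) (hpos : ∀ x, 0 < h₀ x)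
    (hform : ∀ x : ℝ, 1 ≤ |x| → h₀ x = Real.exp (-β * |x|))
    (a b : ℝ) (hb : 0 < b) (hbβ : b < β) :
    ∃ C > 0, ∀ v : ℝ → ℝ,
      Differentiable ℝ v →
      (∀ a' b' : ℝ, v b' - v a' = ∫ x in a'..b', deriv v x) →
      Integrable (fun x => (deriv v x) ^ 2) →
      Integrable (fun x => (v x) ^ 2 * h₀ x) →
      Integrable (fun x => v x * h₀ x) →
      (∫ x : ℝ, v x * h₀ x) = 0 →
      (∫⁻ x : ℝ, ENNReal.ofReal (Real.exp (a * |v x|) * h₀ x)) ≤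
        ENNReal.ofReal (C * Real.exp ((a ^ 2 / (4 * b)) * ∫ x : ℝ, (deriv v x) ^ 2)) := by
  set b₁ := (b + β) / 2 with hb₁_def
  have hb₁pos : 0 < b₁ := by rw [hb₁_def]; linarith
  have hbb₁ : b < b₁ := by rw [hb₁_def]; linarith
  have hb₁β : b₁ < β := by rw [hb₁_def]; linarith
  have hg_int : Integrable (fun x : ℝ => Real.exp (b₁ * |x|) * h₀ x) :=
    tm_g_integrable hb₁β hc hform
  have hh₀nn : ∀ x, (0:ℝ) ≤ h₀ x := fun x => (hpos x).le
  have hh₀_int : Integrable h₀ := by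
    apply hg_int.mono' hc.aestronglyMeasurable
    filter_upwards with x
    rw [Real.norm_eq_abs, abs_of_nonneg (hh₀nn x)]
    nlinarith [Real.one_le_exp (by positivity : (0:ℝ) ≤ b₁ * |x|), hpos x]
  have hxh₀_int : Integrable (fun x : ℝ => |x| * h₀ x) := by
    apply Integrable.mono' (hg_int.const_mul (1 / b₁))
      ((continuous_abs.mul hc).aestronglyMeasurable)
    filter_upwards with x
    rw [Real.norm_eq_abs, Pi.mul_apply, abs_of_nonneg (mul_nonneg (abs_nonneg x) (hh₀nn x))]
    have h1 : b₁ * |x| ≤ Real.exp (b₁ * |x|) := (Real.add_one_le_exp _).trans'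
      (by linarith [Real.add_one_le_exp (b₁ * |x|)])
    have h2 : b₁ * |x| * h₀ x ≤ Real.exp (b₁ * |x|) * h₀ x :=
      mul_le_mul_of_nonneg_right ((Real.add_one_le_exp (b₁ * |x|)).trans' (by linarith)) (hh₀nn x)
    rw [div_mul_eq_mul_div, le_div_iff₀ hb₁pos] -- WARNING check
    nlinarith [hpos x]
  set H := ∫ x : ℝ, h₀ x with hH_def
  set J := ∫ x : ℝ, |x| * h₀ x with hJ_def
  set I := ∫ x : ℝ, Real.exp (b₁ * |x|) * h₀ x with hI_def
  have hH : 0 < H := by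
    have h1 : (0:ℝ) < ∫ x in (0:ℝ)..1, h₀ x :=
      intervalIntegral_pos_of_pos_on (hh₀_int.intervalIntegrable)
        (fun x _ => hpos x) one_pos
    have h2 : (∫ x in (0:ℝ)..1, h₀ x) = ∫ x in Set.Ioc (0:ℝ) 1, h₀ x :=
      intervalIntegral.integral_of_le (by norm_num)
    have h3 : (∫ x in Set.Ioc (0:ℝ) 1, h₀ x) ≤ H :=
      setIntegral_le_integral hh₀_int (Filter.Eventually.of_forall hh₀nn)
    linarith
  have hJ0 : 0 ≤ J := integral_nonneg fun x => mul_nonneg (abs_nonneg x) (hh₀nn x)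
  have hI0 : 0 < I := by
    have h3 : H ≤ I := by
      apply integral_mono hh₀_int hg_int
      intro x
      show h₀ x ≤ Real.exp (b₁ * |x|) * h₀ x
      nlinarith [Real.one_le_exp (by positivity : (0:ℝ) ≤ b₁ * |x|), hpos x]
    linarith
  set δ := a ^ 2 / (4 * b) - a ^ 2 / (4 * b₁) with hδ_def
  have hδ0 : 0 ≤ δ := by
    rw [hδ_def]
    have : a ^ 2 / (4 * b₁) ≤ a ^ 2 / (4 * b) :=
      div_le_div_of_nonneg_left (sq_nonneg a) (by linarith) (by linarith)
    linarith
  set K₀ := a ^ 2 / (4 * δ) * (J / H) with hK₀_def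
  have hK₀0 : 0 ≤ K₀ := by
    rw [hK₀_def]; positivity
  refine ⟨Real.exp K₀ * I, by positivity, ?_⟩
  intro v hdiff hFTC hint2 hint_v2h hint_vh hmean
  set D2 := ∫ x : ℝ, (deriv v x) ^ 2 with hD2_def
  have hD2nn : 0 ≤ D2 := integral_nonneg fun x => sq_nonneg _
  have hfmeas : AEStronglyMeasurable (deriv v) volume :=
    (measurable_deriv v).aestronglyMeasurable
  -- Claim A
  have claimA : ∀ t : ℝ, 0 < t → ∀ x y : ℝ,
      |v x - v y| ≤ t / 2 * |x - y| + D2 / (2 * t) := by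
    intro t ht x y
    rw [hFTC y x]
    have hvolfin : volume (Set.uIoc y x) < ⊤ := by
      rw [Set.uIoc, Real.volume_Ioc]; exact ENNReal.ofReal_lt_top
    have hB : IntegrableOn (fun u : ℝ => t / 2 + (deriv v u) ^ 2 / (2 * t))
        (Set.uIoc y x) volume :=
      (integrableOn_const hvolfin.ne).add (hint2.div_const _).integrableOn
    have hIf : IntegrableOn (fun u : ℝ => ‖deriv v u‖) (Set.uIoc y x) volume := by
      apply hB.mono' hfmeas.norm.restrict
      filter_upwards with u
      rw [norm_norm, Real.norm_eq_abs]
      nlinarith [sq_nonneg (|deriv v u| - t), sq_abs (deriv v u), abs_nonneg (deriv v u),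
        div_mul_cancel₀ ((deriv v u) ^ 2) (by linarith : (2 * t) ≠ 0), ht]
    have hsq : (∫ u in Set.uIoc y x, (deriv v u) ^ 2) ≤ D2 :=
      setIntegral_le_integral hint2 (Filter.Eventually.of_forall fun u => sq_nonneg _)
    have hvol : (volume (Set.uIoc y x)).toReal = |x - y| := by
      rw [Set.uIoc, Real.volume_Ioc, ENNReal.toReal_ofReal (by simp [sub_nonneg, min_le_max])]
      rw [max_sub_min_eq_abs, abs_sub_comm]
    calc |∫ u in y..x, deriv v u| ≤ ∫ u in Set.uIoc y x, ‖deriv v u‖ := by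
          simpa [Real.norm_eq_abs] using
            (intervalIntegral.norm_integral_le_integral_norm_uIoc
              (f := deriv v) (a := y) (b := x) (μ := volume))
      _ ≤ ∫ u in Set.uIoc y x, (t / 2 + (deriv v u) ^ 2 / (2 * t)) := by
          apply integral_mono hIf hB
          intro u
          show ‖deriv v u‖ ≤ t / 2 + (deriv v u) ^ 2 / (2 * t)
          rw [Real.norm_eq_abs]
          nlinarith [sq_nonneg (|deriv v u| - t), sq_abs (deriv v u), abs_nonneg (deriv v u),
            div_mul_cancel₀ ((deriv v u) ^ 2) (by linarith : (2 * t) ≠ 0), ht]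
      _ = (volume (Set.uIoc y x)).toReal * (t / 2)
            + (∫ u in Set.uIoc y x, (deriv v u) ^ 2) / (2 * t) := by
          rw [integral_add (show IntegrableOn (fun _ : ℝ => t / 2) (Set.uIoc y x) volume
              from integrableOn_const hvolfin.ne)
            (hint2.div_const _).integrableOn,
            setIntegral_const, measureReal_def, MeasureTheory.integral_div, smul_eq_mul]
      _ ≤ t / 2 * |x - y| + D2 / (2 * t) := by
          rw [hvol]
          have h1 : (∫ u in Set.uIoc y x, (deriv v u) ^ 2) / (2 * t) ≤ D2 / (2 * t) := by
            gcongr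
          have h2 : |x - y| * (t / 2) = t / 2 * |x - y| := by ring
          linarith
  -- Claim B
  have claimB : ∀ s : ℝ, 0 < s → |v 0| ≤ s / 2 * (J / H) + D2 / (2 * s) := by
    intro s hs
    have hsplit : (fun x : ℝ => (v 0 - v x) * h₀ x)
        = fun x => v 0 * h₀ x - v x * h₀ x := by funext x; ring
    have hsub : Integrable (fun x : ℝ => (v 0 - v x) * h₀ x) := by
      rw [hsplit]; exact (hh₀_int.const_mul (v 0)).sub hint_vh
    have heq : v 0 * H = ∫ x : ℝ, (v 0 - v x) * h₀ x := by
      rw [hsplit, integral_sub (hh₀_int.const_mul (v 0)) hint_vh, hmean, sub_zero,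
        MeasureTheory.integral_const_mul]
    have hRHS : Integrable (fun x : ℝ => (s / 2 * |x| + D2 / (2 * s)) * h₀ x) := by
      have : (fun x : ℝ => (s / 2 * |x| + D2 / (2 * s)) * h₀ x)
          = fun x => s / 2 * (|x| * h₀ x) + D2 / (2 * s) * h₀ x := by funext x; ring
      rw [this]; exact (hxh₀_int.const_mul _).add (hh₀_int.const_mul _)
    have key : |v 0 * H| ≤ s / 2 * J + D2 / (2 * s) * H := by
      rw [heq]
      calc |∫ x : ℝ, (v 0 - v x) * h₀ x| ≤ ∫ x : ℝ, |(v 0 - v x) * h₀ x| := by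
            have h := norm_integral_le_integral_norm (μ := volume)
              (fun x : ℝ => (v 0 - v x) * h₀ x)
            simp only [Real.norm_eq_abs] at h
            exact h
        _ ≤ ∫ x : ℝ, (s / 2 * |x| + D2 / (2 * s)) * h₀ x := by
            apply integral_mono hsub.abs hRHS
            intro x
            show |(v 0 - v x) * h₀ x| ≤ (s / 2 * |x| + D2 / (2 * s)) * h₀ x
            rw [abs_mul, abs_of_nonneg (hh₀nn x)]
            apply mul_le_mul_of_nonneg_right _ (hh₀nn x)
            have h1 := claimA s hs 0 x
            simpa using h1
        _ = s / 2 * J + D2 / (2 * s) * H := by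
            rw [show (fun x : ℝ => (s / 2 * |x| + D2 / (2 * s)) * h₀ x)
                = fun x => s / 2 * (|x| * h₀ x) + D2 / (2 * s) * h₀ x
                from funext fun x => by ring,
              integral_add (hxh₀_int.const_mul _) (hh₀_int.const_mul _),
              MeasureTheory.integral_const_mul, MeasureTheory.integral_const_mul]
    have h2 : |v 0| * H ≤ s / 2 * J + D2 / (2 * s) * H := by
      rwa [abs_mul, abs_of_pos hH] at key
    have h3 : |v 0| ≤ (s / 2 * J + D2 / (2 * s) * H) / H := (le_div_iff₀ hH).2 h2
    calc |v 0| ≤ (s / 2 * J + D2 / (2 * s) * H) / H := h3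
      _ = s / 2 * (J / H) + D2 / (2 * s) := by field_simp
  -- main pointwise bound
  have hpt : ∀ x : ℝ, a * |v x| ≤ b₁ * |x| + a ^ 2 / (4 * b) * D2 + K₀ := by
    intro x
    rcases eq_or_ne a 0 with ha | ha
    · have hK : K₀ = 0 := by rw [hK₀_def, hδ_def, ha]; norm_num
      rw [ha, hK]
      have h1 : (0:ℝ) ^ 2 / (4 * b) * D2 = 0 := by norm_num
      rw [h1]
      have : 0 ≤ b₁ * |x| := mul_nonneg hb₁pos.le (abs_nonneg x)
      linarith
    · have hapos : 0 < |a| := abs_pos.2 ha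
      have ha2 : 0 < a ^ 2 := by positivity
      have hδpos : 0 < δ := by
        rw [hδ_def]
        have h := div_lt_div_of_pos_left ha2 (by linarith : (0:ℝ) < 4 * b)
          (by linarith : 4 * b < 4 * b₁)
        linarith
      have ht : 0 < 2 * b₁ / |a| := by positivity
      have hs : 0 < |a| / (2 * δ) := by positivity
      have h1 := claimA (2 * b₁ / |a|) ht x 0
      have h2 := claimB (|a| / (2 * δ)) hs
      have h3 : |v x| ≤ |v x - v 0| + |v 0| := by
        have h := abs_add_le (v x - v 0) (v 0); simpa using h
      have h4 : a * |v x| ≤ |a| * |v x| :=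
        mul_le_mul_of_nonneg_right (le_abs_self a) (abs_nonneg _)
      have e1 : |a| * ((2 * b₁ / |a|) / 2 * |x - 0| + D2 / (2 * (2 * b₁ / |a|)))
          = b₁ * |x| + a ^ 2 / (4 * b₁) * D2 := by
        rw [sub_zero]; exact tm_e1 a b₁ x D2 hb₁pos ha
      have e2 : |a| * ((|a| / (2 * δ)) / 2 * (J / H) + D2 / (2 * (|a| / (2 * δ))))
          = a ^ 2 / (4 * δ) * (J / H) + δ * D2 :=
        tm_e2 a δ J H D2 hδpos hH ha
      have e3 : a ^ 2 / (4 * b₁) + δ = a ^ 2 / (4 * b) := by rw [hδ_def]; ring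
      calc a * |v x| ≤ |a| * |v x| := h4
        _ ≤ |a| * (|v x - v 0| + |v 0|) :=
            mul_le_mul_of_nonneg_left h3 (abs_nonneg a)
        _ ≤ |a| * (((2 * b₁ / |a|) / 2 * |x - 0| + D2 / (2 * (2 * b₁ / |a|)))
              + ((|a| / (2 * δ)) / 2 * (J / H) + D2 / (2 * (|a| / (2 * δ))))) :=
            mul_le_mul_of_nonneg_left (add_le_add h1 h2) (abs_nonneg a)
        _ = (b₁ * |x| + a ^ 2 / (4 * b₁) * D2)
              + (a ^ 2 / (4 * δ) * (J / H) + δ * D2) := by rw [mul_add, e1, e2]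
        _ = b₁ * |x| + a ^ 2 / (4 * b) * D2 + K₀ := by
            rw [hK₀_def, ← e3]; ring
  -- conclusion
  have hpt2 : ∀ x : ℝ, Real.exp (a * |v x|) * h₀ x
      ≤ (Real.exp (K₀ + a ^ 2 / (4 * b) * D2)) * (Real.exp (b₁ * |x|) * h₀ x) := by
    intro x
    have h1 : Real.exp (a * |v x|) ≤ Real.exp (b₁ * |x| + a ^ 2 / (4 * b) * D2 + K₀) :=
      Real.exp_le_exp.2 (hpt x)
    calc Real.exp (a * |v x|) * h₀ x
        ≤ Real.exp (b₁ * |x| + a ^ 2 / (4 * b) * D2 + K₀) * h₀ x :=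
          mul_le_mul_of_nonneg_right h1 (hh₀nn x)
      _ = (Real.exp (K₀ + a ^ 2 / (4 * b) * D2)) * (Real.exp (b₁ * |x|) * h₀ x) := by
          rw [← mul_assoc, ← Real.exp_add]
          congr 2
          ring
  calc (∫⁻ x : ℝ, ENNReal.ofReal (Real.exp (a * |v x|) * h₀ x))
      ≤ ∫⁻ x : ℝ, ENNReal.ofReal
          ((Real.exp (K₀ + a ^ 2 / (4 * b) * D2)) * (Real.exp (b₁ * |x|) * h₀ x)) :=
        lintegral_mono fun x => ENNReal.ofReal_le_ofReal (hpt2 x)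
    _ = ENNReal.ofReal (∫ x : ℝ,
          (Real.exp (K₀ + a ^ 2 / (4 * b) * D2)) * (Real.exp (b₁ * |x|) * h₀ x)) :=
        (ofReal_integral_eq_lintegral_ofReal (hg_int.const_mul _)
          (Filter.Eventually.of_forall fun x => mul_nonneg (Real.exp_nonneg _)
            (mul_nonneg (Real.exp_nonneg _) (hh₀nn x)))).symm
    _ = ENNReal.ofReal ((Real.exp K₀ * I) * Real.exp (a ^ 2 / (4 * b) * D2)) := by
        rw [MeasureTheory.integral_const_mul]
        congr 1
        rw [Real.exp_add]
        ring
end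

section
/- Let β > 0, h₀ continuous positive with h₀(x) = e^{-β|x|} for |x| ≥ 1, dμ = h₀ dx. There exists C > 0 such that every absolutely continuous v : ℝ → ℝ with v' ∈ L²(dx) and ∫_ℝ v dμ = 0 satisfies ∫_ℝ v² dμ ≤ C·∫_ℝ (v')² dx. -/
open Real MeasureTheory intervalIntegral Set

lemma cs_interval {f : ℝ → ℝ} (hm : AEStronglyMeasurable f volume)
    (hsq : Integrable (fun t => f t ^ 2)) {a b : ℝ} (hab : a ≤ b) :
    (∫ t in a..b, f t) ^ 2 ≤ (b - a) * ∫ t : ℝ, f t ^ 2 := by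
  set μx := volume.restrict (Set.Ioc a b) with hμx
  haveI : IsFiniteMeasure μx := ⟨by
    rw [hμx, Measure.restrict_apply_univ]; exact measure_Ioc_lt_top⟩
  have hK : (0:ℝ) ≤ ∫ t : ℝ, f t ^ 2 := integral_nonneg fun t => sq_nonneg _
  have hmem : MemLp f (ENNReal.ofReal 2) μx := by
    have : MemLp f 2 volume := (memLp_two_iff_integrable_sq hm).2 hsq
    have h2 : (ENNReal.ofReal 2) = (2 : ENNReal) := by
      rw [ENNReal.ofReal_ofNat]
    rw [h2]
    exact this.restrict (Set.Ioc a b)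
  have hone : MemLp (fun _ : ℝ => (1:ℝ)) (ENNReal.ofReal 2) μx := memLp_const 1
  have hconj : Real.HolderConjugate 2 2 := Real.HolderConjugate.two_two
  have hCS := integral_mul_norm_le_Lp_mul_Lq (μ := μx) hconj hmem hone
  have e1 : ∫ t, ‖f t‖ * ‖(1:ℝ)‖ ∂μx = ∫ t, |f t| ∂μx := by
    simp [Real.norm_eq_abs]
  have e2 : ∫ t, ‖f t‖ ^ (2:ℝ) ∂μx = ∫ t, f t ^ 2 ∂μx := by
    refine integral_congr_ae (Filter.Eventually.of_forall fun t => ?_)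
    show ‖f t‖ ^ (2:ℝ) = f t ^ 2
    rw [Real.norm_eq_abs, show (2:ℝ) = ((2:ℕ):ℝ) by norm_num, Real.rpow_natCast, sq_abs]
  have e3 : ∫ t, ‖(1:ℝ)‖ ^ (2:ℝ) ∂μx = b - a := by
    simp [Real.norm_eq_abs, hμx, Real.volume_Ioc, ENNReal.toReal_ofReal (sub_nonneg.2 hab), hab]
  rw [e1, e2, e3] at hCS
  have hmuK : ∫ t, f t ^ 2 ∂μx ≤ ∫ t : ℝ, f t ^ 2 :=
    setIntegral_le_integral hsq (Filter.Eventually.of_forall fun t => sq_nonneg _)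
  have hmuK0 : (0:ℝ) ≤ ∫ t, f t ^ 2 ∂μx := integral_nonneg fun t => sq_nonneg _
  have habs : |∫ t in a..b, f t| ≤ ∫ t, |f t| ∂μx := by
    rw [intervalIntegral.integral_of_le hab]
    simpa [Real.norm_eq_abs] using norm_integral_le_integral_norm (μ := μx) f
  have habs2 : (∫ t in a..b, f t) ^ 2 ≤ (∫ t, |f t| ∂μx) ^ 2 := by
    rw [← sq_abs]
    exact pow_le_pow_left₀ (abs_nonneg _) (habs.trans (le_refl _)) 2
  calc (∫ t in a..b, f t) ^ 2 ≤ (∫ t, |f t| ∂μx) ^ 2 := habs2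
    _ ≤ ((∫ t, f t ^ 2 ∂μx) ^ (1/2:ℝ) * (b - a) ^ (1/2:ℝ)) ^ 2 := by
        apply pow_le_pow_left₀ (integral_nonneg fun t => abs_nonneg _) hCS
    _ = (∫ t, f t ^ 2 ∂μx) * (b - a) := by
        rw [mul_pow, ← Real.rpow_natCast ((∫ t, f t ^ 2 ∂μx) ^ (1/2:ℝ)) 2,
          ← Real.rpow_natCast ((b - a) ^ (1/2:ℝ)) 2,
          ← Real.rpow_mul hmuK0, ← Real.rpow_mul (sub_nonneg.2 hab)]
        norm_num
    _ ≤ (b - a) * ∫ t : ℝ, f t ^ 2 := by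
        rw [mul_comm]
        exact mul_le_mul_of_nonneg_left hmuK (sub_nonneg.2 hab)

lemma expbound {a t : ℝ} (ha : 0 < a) (ht : 0 ≤ t) :
    (1 + t) * Real.exp (-(a * t)) ≤ (a + 1) / a := by
  rw [le_div_iff₀ ha]
  have h1 : a * t + 1 ≤ Real.exp (a * t) := Real.add_one_le_exp (a * t)
  have h2 : Real.exp (-(a * t)) * Real.exp (a * t) = 1 := by
    rw [← Real.exp_add]; simp
  have hE : 0 < Real.exp (-(a * t)) := Real.exp_pos _
  have hF : 0 < Real.exp (a * t) := Real.exp_pos _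
  have hE1 : Real.exp (-(a * t)) ≤ 1 := by
    nlinarith
  have h3 : a * t * Real.exp (-(a * t)) ≤ 1 := by
    nlinarith
  nlinarith

theorem stmt18 (β : ℝ) (hβ : 0 < β) (h₀ : ℝ → ℝ)
    (hc : Continuous h₀) (hpos : ∀ x, 0 < h₀ x)
    (hform : ∀ x : ℝ, 1 ≤ |x| → h₀ x = Real.exp (-β * |x|)) :
    ∃ C > 0, ∀ v : ℝ → ℝ,
      Differentiable ℝ v →
      (∀ a b : ℝ, v b - v a = ∫ x in a..b, deriv v x) →
      Integrable (fun x => (deriv v x) ^ 2) →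
      Integrable (fun x => (v x) ^ 2 * h₀ x) →
      Integrable (fun x => v x * h₀ x) →
      (∫ x : ℝ, v x * h₀ x) = 0 →
      (∫ x : ℝ, (v x) ^ 2 * h₀ x) ≤ C * ∫ x : ℝ, (deriv v x) ^ 2 := by
  -- the cube bound on the whole line
  obtain ⟨A, hA, hAbd⟩ : ∃ A > 0, ∀ x : ℝ, (1 + |x|) ^ 3 * h₀ x ≤ A := by
    set F : ℝ → ℝ := fun x => (1 + |x|) ^ 3 * h₀ x with hF
    have hFc : Continuous F := ((continuous_const.add continuous_abs).pow 3).mul hc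
    obtain ⟨z, _, hzmax⟩ := isCompact_Icc.exists_isMaxOn
      (Set.nonempty_Icc.2 (by norm_num : (-1:ℝ) ≤ 1)) hFc.continuousOn
    set B : ℝ := ((β/3 + 1) / (β/3)) ^ 3 with hB
    refine ⟨max (F z) B, lt_max_iff.2 (Or.inl (by
      have := hpos z
      positivity)), fun x => ?_⟩
    rcases le_or_gt (|x|) 1 with hx | hx
    · exact le_max_of_le_left (hzmax (abs_le.mp hx))
    · have hx1 : (1:ℝ) ≤ |x| := hx.le
      rw [hF]
      simp only
      rw [hform x hx1]
      have hb3 : 0 < β / 3 := by linarith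
      have key : (1 + |x|) * Real.exp (-(β/3 * |x|)) ≤ (β/3 + 1) / (β/3) :=
        expbound hb3 (abs_nonneg x)
      have hexp : Real.exp (-β * |x|) = (Real.exp (-(β/3 * |x|))) ^ 3 := by
        rw [← Real.exp_nat_mul]
        congr 1
        ring
      have hnn : 0 ≤ (1 + |x|) * Real.exp (-(β/3 * |x|)) := by positivity
      calc (1 + |x|) ^ 3 * Real.exp (-β * |x|)
          = ((1 + |x|) * Real.exp (-(β/3 * |x|))) ^ 3 := by rw [hexp]; ring
        _ ≤ ((β/3 + 1) / (β/3)) ^ 3 := by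
            exact pow_le_pow_left₀ hnn key 3
        _ ≤ max (F z) B := le_max_right _ _
  -- dominating integrable function
  have hg : Integrable (fun x : ℝ => A * (1 + ‖x‖) ^ (-(2:ℝ))) := by
    refine (integrable_one_add_norm ?_).const_mul A
    rw [Module.finrank_self]
    norm_num
  have hdom : ∀ x : ℝ, (1 + |x|) * h₀ x ≤ A * (1 + ‖x‖) ^ (-(2:ℝ)) := by
    intro x
    have h1 : (0:ℝ) < 1 + |x| := by positivity
    rw [Real.norm_eq_abs, Real.rpow_neg h1.le,
      show (2:ℝ) = ((2:ℕ):ℝ) by norm_num, Real.rpow_natCast]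
    rw [mul_comm A, ← div_eq_inv_mul, le_div_iff₀ (by positivity)]
    calc (1 + |x|) * h₀ x * (1 + |x|) ^ 2 = (1 + |x|) ^ 3 * h₀ x := by ring
      _ ≤ A := hAbd x
  -- basic integrability facts
  have hInt0 : Integrable h₀ := by
    refine hg.mono' hc.aestronglyMeasurable (Filter.Eventually.of_forall fun x => ?_)
    rw [Real.norm_eq_abs, abs_of_pos (hpos x)]
    calc h₀ x = 1 * h₀ x := (one_mul _).symm
      _ ≤ (1 + |x|) * h₀ x := by
          apply mul_le_mul_of_nonneg_right _ (hpos x).le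
          linarith [abs_nonneg x]
      _ ≤ _ := hdom x
  have hInt1 : Integrable (fun x : ℝ => |x| * h₀ x) := by
    refine hg.mono' (continuous_abs.mul hc).aestronglyMeasurable
      (Filter.Eventually.of_forall fun x => ?_)
    rw [Real.norm_eq_abs, abs_of_nonneg (mul_nonneg (abs_nonneg x) (hpos x).le)]
    calc |x| * h₀ x ≤ (1 + |x|) * h₀ x := by
          apply mul_le_mul_of_nonneg_right _ (hpos x).le
          linarith
      _ ≤ _ := hdom x
  have hInts : Integrable (fun x : ℝ => Real.sqrt |x| * h₀ x) := by
    refine hg.mono' ((Real.continuous_sqrt.comp continuous_abs).mul hc).aestronglyMeasurable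
      (Filter.Eventually.of_forall fun x => ?_)
    rw [Real.norm_eq_abs, abs_of_nonneg (mul_nonneg (Real.sqrt_nonneg _) (hpos x).le)]
    have hs : Real.sqrt |x| ≤ 1 + |x| := by
      have h1 := Real.sq_sqrt (abs_nonneg x)
      nlinarith [Real.sqrt_nonneg |x|]
    calc Real.sqrt |x| * h₀ x ≤ (1 + |x|) * h₀ x :=
          mul_le_mul_of_nonneg_right hs (hpos x).le
      _ ≤ _ := hdom x
  set M : ℝ := ∫ x : ℝ, h₀ x with hM
  set m₁ : ℝ := ∫ x : ℝ, |x| * h₀ x with hm₁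
  set s : ℝ := ∫ x : ℝ, Real.sqrt |x| * h₀ x with hs
  have hMpos : 0 < M := by
    rw [hM]
    rw [integral_pos_iff_support_of_nonneg (fun x => (hpos x).le) hInt0]
    have : Function.support h₀ = Set.univ := by
      ext x; simp [Function.support, (hpos x).ne']
    rw [this]
    simp
  have hm₁0 : 0 ≤ m₁ := integral_nonneg fun x => mul_nonneg (abs_nonneg x) (hpos x).le
  have hs0 : 0 ≤ s := integral_nonneg fun x => mul_nonneg (Real.sqrt_nonneg _) (hpos x).le
  refine ⟨2 * s ^ 2 / M + 2 * m₁ + 1, by positivity, ?_⟩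
  intro v hdiff hftc hK2 hv2 hv1 hmean
  set K : ℝ := ∫ x : ℝ, (deriv v x) ^ 2 with hKdef
  have hK0 : 0 ≤ K := integral_nonneg fun x => sq_nonneg _
  have hdm : AEStronglyMeasurable (deriv v) volume :=
    (aestronglyMeasurable_deriv v volume)
  -- Step 1 : pointwise bound
  have step1 : ∀ x : ℝ, (v x - v 0) ^ 2 ≤ |x| * K := by
    intro x
    rcases le_or_gt 0 x with hx | hx
    · have := hftc 0 x
      rw [this]
      have h := cs_interval hdm hK2 hx
      rw [abs_of_nonneg hx]
      simpa using h
    · have := hftc x 0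
      have h : (v x - v 0) ^ 2 = (v 0 - v x) ^ 2 := by ring
      rw [h, this]
      have hcs := cs_interval hdm hK2 hx.le
      rw [abs_of_neg hx]
      calc (∫ t in x..0, deriv v t) ^ 2 ≤ (0 - x) * K := hcs
        _ = -x * K := by ring
  -- Step 2 : bound on v 0
  have step2 : |v 0| * M ≤ Real.sqrt K * s := by
    have hIsub : Integrable (fun y : ℝ => (v y - v 0) * h₀ y) := by
      have : (fun y : ℝ => (v y - v 0) * h₀ y)
          = fun y : ℝ => v y * h₀ y - v 0 * h₀ y := by
        funext y; ring
      rw [this]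
      exact hv1.sub (hInt0.const_mul (v 0))
    have e1 : (∫ y : ℝ, (v y - v 0) * h₀ y) = -(v 0 * M) := by
      have : (fun y : ℝ => (v y - v 0) * h₀ y)
          = fun y : ℝ => v y * h₀ y - v 0 * h₀ y := by funext y; ring
      rw [this, integral_sub hv1 (hInt0.const_mul (v 0)), hmean, MeasureTheory.integral_const_mul]
      rw [← hM]; ring
    have e2 : |v 0| * M = |∫ y : ℝ, (v y - v 0) * h₀ y| := by
      rw [e1, abs_neg, abs_mul, abs_of_pos hMpos]
    rw [e2]
    calc |∫ y : ℝ, (v y - v 0) * h₀ y| ≤ ∫ y : ℝ, |v y - v 0| * |h₀ y| := by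
          simpa [Real.norm_eq_abs, abs_mul] using norm_integral_le_integral_norm
            (μ := volume) (fun y : ℝ => (v y - v 0) * h₀ y)
      _ ≤ ∫ y : ℝ, Real.sqrt K * (Real.sqrt |y| * h₀ y) := by
          have hIabs : Integrable (fun y : ℝ => |v y - v 0| * |h₀ y|) := by
            simpa [abs_mul] using hIsub.abs
          refine MeasureTheory.integral_mono hIabs (hInts.const_mul _) fun y => ?_
          simp only
          rw [abs_of_pos (hpos y)]
          have h1 : |v y - v 0| ≤ Real.sqrt (|y| * K) :=
            Real.abs_le_sqrt (step1 y)
          rw [Real.sqrt_mul (abs_nonneg y)] at h1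
          calc |v y - v 0| * h₀ y ≤ Real.sqrt |y| * Real.sqrt K * h₀ y :=
                mul_le_mul_of_nonneg_right h1 (hpos y).le
            _ = Real.sqrt K * (Real.sqrt |y| * h₀ y) := by ring
      _ = Real.sqrt K * s := by rw [MeasureTheory.integral_const_mul, ← hs]
  -- consequence
  have step2' : (v 0) ^ 2 * M ^ 2 ≤ K * s ^ 2 := by
    have h := mul_self_le_mul_self (by positivity : (0:ℝ) ≤ |v 0| * M) step2
    calc (v 0) ^ 2 * M ^ 2 = (|v 0| * M) * (|v 0| * M) := by rw [← sq_abs]; ring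
      _ ≤ (Real.sqrt K * s) * (Real.sqrt K * s) := h
      _ = (Real.sqrt K * Real.sqrt K) * s ^ 2 := by ring
      _ = K * s ^ 2 := by rw [Real.mul_self_sqrt hK0]
  have hv00 : (v 0) ^ 2 ≤ K * s ^ 2 / M ^ 2 := by
    rw [le_div_iff₀ (by positivity)]
    exact step2'
  -- Step 3 : final estimate
  have hRHSint : Integrable (fun x : ℝ => 2 * (v 0) ^ 2 * h₀ x + 2 * K * (|x| * h₀ x)) :=
    (hInt0.const_mul _).add (hInt1.const_mul _)
  have step3 : (∫ x : ℝ, (v x) ^ 2 * h₀ x)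
      ≤ 2 * (v 0) ^ 2 * M + 2 * K * m₁ := by
    have hmono : (∫ x : ℝ, (v x) ^ 2 * h₀ x)
        ≤ ∫ x : ℝ, (2 * (v 0) ^ 2 * h₀ x + 2 * K * (|x| * h₀ x)) := by
      refine integral_mono hv2 hRHSint fun x => ?_
      simp only
      have h1 : (v x) ^ 2 ≤ 2 * (v 0) ^ 2 + 2 * (v x - v 0) ^ 2 := by
        nlinarith [sq_nonneg (v 0 - (v x - v 0))]
      have h2 : (v x - v 0) ^ 2 ≤ |x| * K := step1 x
      have := hpos x
      nlinarith
    rw [integral_add (hInt0.const_mul _) (hInt1.const_mul _),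
      MeasureTheory.integral_const_mul, MeasureTheory.integral_const_mul] at hmono
    rw [← hM, ← hm₁] at hmono
    exact hmono
  have hfinal : 2 * (v 0) ^ 2 * M + 2 * K * m₁
      ≤ (2 * s ^ 2 / M + 2 * m₁ + 1) * K := by
    have h1 : 2 * (v 0) ^ 2 * M ≤ 2 * (K * s ^ 2 / M ^ 2) * M := by
      have := mul_le_mul_of_nonneg_right hv00 hMpos.le
      nlinarith
    have h2 : 2 * (K * s ^ 2 / M ^ 2) * M = (2 * s ^ 2 / M) * K := by
      field_simp
    calc 2 * (v 0) ^ 2 * M + 2 * K * m₁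
        ≤ (2 * s ^ 2 / M) * K + (2 * m₁) * K := by
          rw [← h2]
          have : 2 * K * m₁ = (2 * m₁) * K := by ring
          rw [this]
          exact add_le_add h1 (le_refl _)
      _ ≤ (2 * s ^ 2 / M + 2 * m₁ + 1) * K := by nlinarith
  exact step3.trans hfinal
end
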